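/- arXiv:1001.5120 — 5 statements merged into one kernel-verified Lean document; each statement's English description precedes it below -/
import Mathlib

section
/- For every integer m ≥ 3, the improper integral ∫₀^∞ (√(1+t^m) − t^{m/2}) dt converges and equals B(1/2, 1 + 1/m) / (2 cos(π/m)), where B is the Euler beta function. -/
open Real MeasureTheory Set Filter Topology

lemma pow_half_sq (m : ℕ) (t : ℝ) (ht : 0 ≤ t) : (t ^ ((m:ℝ)/2))^2 = t ^ m := by
  rw [← Real.rpow_natCast (t ^ ((m:ℝ)/2)) 2, ← Real.rpow_mul ht, ← Real.rpow_natCast t m]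
  norm_num

lemma sqrt_pow_eq (m : ℕ) (t : ℝ) (ht : 0 ≤ t) : Real.sqrt (t ^ m) = t ^ ((m:ℝ)/2) := by
  rw [Real.sqrt_eq_rpow, ← Real.rpow_natCast t m, ← Real.rpow_mul ht]
  ring_nf

-- key identity: f t = 1/(D + t^{m/2})
lemma f_eq (m : ℕ) (t : ℝ) (ht : 0 ≤ t) :
    Real.sqrt (1 + t ^ m) - t ^ ((m:ℝ)/2) = 1 / (Real.sqrt (1 + t ^ m) + t ^ ((m:ℝ)/2)) := by
  have h1 : (0:ℝ) ≤ 1 + t ^ m := by positivity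
  have hD : Real.sqrt (1 + t^m) ^ 2 = 1 + t ^ m := Real.sq_sqrt h1
  have hs : (t ^ ((m:ℝ)/2))^2 = t ^ m := pow_half_sq m t ht
  have hden : 0 < Real.sqrt (1 + t^m) + t ^ ((m:ℝ)/2) := by
    have : 0 < Real.sqrt (1 + t^m) := Real.sqrt_pos.2 (by positivity)
    have : 0 ≤ t ^ ((m:ℝ)/2) := Real.rpow_nonneg ht _
    linarith
  field_simp
  nlinarith [hD, hs]

lemma integrableOn_of_bounds {f : ℝ → ℝ} (hmeas : AEStronglyMeasurable f (volume.restrict (Ioi 0)))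
    {r s : ℝ} (hr : -1 < r) (hs : s < -1)
    (h1 : ∀ x ∈ Ioc (0:ℝ) 1, |f x| ≤ x ^ r) (h2 : ∀ x ∈ Ioi (1:ℝ), |f x| ≤ x ^ s) :
    IntegrableOn f (Ioi 0) := by
  rw [← Ioc_union_Ioi_eq_Ioi (zero_le_one : (0:ℝ) ≤ 1)]
  apply IntegrableOn.union
  · have hg : IntegrableOn (fun x : ℝ => x ^ r) (Ioc 0 1) := by
      rw [← intervalIntegrable_iff_integrableOn_Ioc_of_le zero_le_one]
      exact intervalIntegral.intervalIntegrable_rpow' hr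
    refine hg.integrable.mono (hmeas.mono_measure (Measure.restrict_mono Ioc_subset_Ioi_self le_rfl)) ?_
    rw [ae_restrict_iff' measurableSet_Ioc]
    refine ae_of_all _ fun x hx => ?_
    have : |f x| ≤ x ^ r := h1 x hx
    simpa [Real.norm_eq_abs, abs_of_nonneg (Real.rpow_nonneg hx.1.le r)] using this
  · have hg : IntegrableOn (fun x : ℝ => x ^ s) (Ioi 1) := integrableOn_Ioi_rpow_of_lt hs one_pos
    refine hg.integrable.mono (hmeas.mono_measure (Measure.restrict_mono (Ioi_subset_Ioi zero_le_one) le_rfl)) ?_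
    rw [ae_restrict_iff' measurableSet_Ioi]
    refine ae_of_all _ fun x hx => ?_
    have : |f x| ≤ x ^ s := h2 x hx
    simpa [Real.norm_eq_abs, abs_of_nonneg (Real.rpow_nonneg (zero_le_one.trans hx.out.le) s)] using this

lemma D_ge_one (m : ℕ) (t : ℝ) (ht : 0 ≤ t) : 1 ≤ Real.sqrt (1 + t ^ m) := by
  have h1 : (0:ℝ) ≤ 1 + t ^ m := by positivity
  nlinarith [Real.sq_sqrt h1, Real.sqrt_nonneg (1 + t^m), pow_nonneg ht m]

lemma D_ge_pow (m : ℕ) (t : ℝ) (ht : 0 ≤ t) : t ^ ((m:ℝ)/2) ≤ Real.sqrt (1 + t ^ m) := by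
  rw [← sqrt_pow_eq m t ht]
  exact Real.sqrt_le_sqrt (by linarith)

lemma integrable_f (m : ℕ) (hm : 3 ≤ m) :
    IntegrableOn (fun t : ℝ => Real.sqrt (1 + t ^ m) - t ^ ((m : ℝ) / 2)) (Ioi 0) := by
  have hmeas : AEStronglyMeasurable (fun t : ℝ => Real.sqrt (1 + t ^ m) - t ^ ((m : ℝ) / 2))
      (volume.restrict (Ioi 0)) := by
    apply Measurable.aestronglyMeasurable
    fun_prop
  refine integrableOn_of_bounds hmeas (r := 0) (s := -(3/2)) (by norm_num) (by norm_num) ?_ ?_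
  · intro x hx
    have hx0 : (0:ℝ) ≤ x := hx.1.le
    have hpos : 0 ≤ x ^ ((m:ℝ)/2) := Real.rpow_nonneg hx0 _
    have h1 : 1 ≤ Real.sqrt (1 + x ^ m) := D_ge_one m x hx0
    rw [f_eq m x hx0, Real.rpow_zero]
    rw [abs_of_nonneg (by positivity)]
    rw [div_le_one (by linarith)]
    linarith
  · intro x hx
    have hx1 : (1:ℝ) ≤ x := hx.out.le
    have hx0 : (0:ℝ) ≤ x := zero_le_one.trans hx1
    have hpos : 0 < x ^ ((3:ℝ)/2) := Real.rpow_pos_of_pos (by linarith) _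
    have hle : x ^ ((3:ℝ)/2) ≤ x ^ ((m:ℝ)/2) := by
      apply Real.rpow_le_rpow_of_exponent_le hx1
      have : (3:ℝ) ≤ (m:ℝ) := by exact_mod_cast hm
      linarith
    have hD : 0 ≤ Real.sqrt (1 + x ^ m) := Real.sqrt_nonneg _
    rw [f_eq m x hx0, abs_of_nonneg (by positivity)]
    rw [show x ^ (-(3/2) : ℝ) = 1 / x ^ ((3:ℝ)/2) by
      rw [Real.rpow_neg hx0, one_div]]
    apply one_div_le_one_div_of_le hpos
    have := D_ge_pow m x hx0
    linarith


lemma integrable_psi (m : ℕ) (hm : 3 ≤ m) (e : ℝ) (he : 0 ≤ e) :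
    IntegrableOn (fun x : ℝ => x ^ ((m:ℝ)/2 - 2) / (Real.sqrt (1 + x ^ m) + e)) (Ioi 0) := by
  have hmeas : AEStronglyMeasurable (fun x : ℝ => x ^ ((m:ℝ)/2 - 2) / (Real.sqrt (1 + x ^ m) + e))
      (volume.restrict (Ioi 0)) := by
    apply Measurable.aestronglyMeasurable
    fun_prop
  have hm3 : (3:ℝ) ≤ (m:ℝ) := by exact_mod_cast hm
  refine integrableOn_of_bounds hmeas (r := (m:ℝ)/2 - 2) (s := -2) (by linarith) (by norm_num) ?_ ?_
  · intro x hx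
    have hx0 : (0:ℝ) < x := hx.1
    have h1 : 1 ≤ Real.sqrt (1 + x ^ m) := D_ge_one m x hx0.le
    have hnum : 0 ≤ x ^ ((m:ℝ)/2 - 2) := Real.rpow_nonneg hx0.le _
    rw [abs_of_nonneg (by positivity)]
    calc x ^ ((m:ℝ)/2 - 2) / (Real.sqrt (1 + x ^ m) + e) ≤ x ^ ((m:ℝ)/2 - 2) / 1 := by
          exact div_le_div_of_nonneg_left hnum one_pos (by linarith)
        _ = x ^ ((m:ℝ)/2 - 2) := div_one _
  · intro x hx
    have hx1 : (1:ℝ) ≤ x := hx.out.le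
    have hx0 : (0:ℝ) < x := lt_of_lt_of_le one_pos hx1
    have hD : x ^ ((m:ℝ)/2) ≤ Real.sqrt (1 + x ^ m) + e := by
      have := D_ge_pow m x hx0.le; linarith
    have hpow : 0 < x ^ ((m:ℝ)/2) := Real.rpow_pos_of_pos hx0 _
    have hnum : 0 ≤ x ^ ((m:ℝ)/2 - 2) := Real.rpow_nonneg hx0.le _
    rw [abs_of_nonneg (by positivity)]
    calc x ^ ((m:ℝ)/2 - 2) / (Real.sqrt (1 + x ^ m) + e)
        ≤ x ^ ((m:ℝ)/2 - 2) / x ^ ((m:ℝ)/2) := by gcongr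
      _ = x ^ (-2 : ℝ) := by
          rw [← Real.rpow_sub hx0]; ring_nf

lemma inv_step (m : ℕ) (hm : 3 ≤ m) :
    ∫ t in Ioi (0:ℝ), (Real.sqrt (1 + t ^ m) - t ^ ((m : ℝ) / 2)) =
    ∫ x in Ioi (0:ℝ), x ^ ((m:ℝ)/2 - 2) / (Real.sqrt (1 + x ^ m) + 1) := by
  rw [← integral_comp_rpow_Ioi (fun t => Real.sqrt (1 + t ^ m) - t ^ ((m : ℝ) / 2))
    (p := -1) (by norm_num)]
  refine setIntegral_congr_fun measurableSet_Ioi fun x hx => ?_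
  have hx0 : (0:ℝ) < x := hx
  have hxm : (0:ℝ) < x ^ m := pow_pos hx0 m
  set s := x ^ ((m:ℝ)/2) with hs_def
  have hs : 0 < s := Real.rpow_pos_of_pos hx0 _
  have hs2 : s ^ 2 = x ^ m := pow_half_sq m x hx0.le
  set D := Real.sqrt (1 + x ^ m) with hD_def
  have hD2 : D ^ 2 = 1 + x ^ m := Real.sq_sqrt (by positivity)
  have hD1 : 1 ≤ D := D_ge_one m x hx0.le
  have e1 : x ^ (-1:ℝ) = x⁻¹ := Real.rpow_neg_one x
  have e2 : ((x⁻¹) ^ m : ℝ) = (x ^ m)⁻¹ := inv_pow x m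
  have e3 : Real.sqrt (1 + (x ^ m)⁻¹) = D / s := by
    rw [show (1 + (x ^ m)⁻¹) = (1 + x ^ m) / x ^ m by field_simp; ring]
    rw [Real.sqrt_div (by positivity) , sqrt_pow_eq m x hx0.le]
  have e4 : (x⁻¹ : ℝ) ^ ((m:ℝ)/2) = s⁻¹ := by
    rw [← Real.rpow_neg_one x, ← Real.rpow_mul hx0.le, hs_def, ← Real.rpow_neg hx0.le]
    norm_num
  have e5 : x ^ ((-1:ℝ) - 1) = (x^2)⁻¹ := by
    rw [show ((-1:ℝ) - 1) = -(2:ℕ) by norm_num, Real.rpow_neg hx0.le, Real.rpow_natCast]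
  have e6 : x ^ ((m:ℝ)/2 - 2) = s / x ^ 2 := by
    rw [hs_def, ← Real.rpow_natCast x 2, ← Real.rpow_sub hx0]
    norm_num
  simp only [smul_eq_mul, e1, e2, e3, e4, e5, e6, abs_neg, abs_one]
  have hDpos : 0 < D := lt_of_lt_of_le one_pos hD1
  field_simp
  ring_nf
  nlinarith [hs2, hD2, hs, hDpos]

lemma hasDerivAt_G (m : ℕ) (hm : 3 ≤ m) (x : ℝ) (hx : 0 < x) :
    HasDerivAt (fun x : ℝ => -(2/((m:ℝ)+2)) * (x ^ ((m:ℝ)/2 - 1) / (Real.sqrt (1 + x^m) + 1)))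
      (x ^ ((m:ℝ)/2 - 2) / (Real.sqrt (1 + x ^ m) + 1)
        - ((m:ℝ)/((m:ℝ)+2)) * (x ^ ((m:ℝ)/2 - 2) / Real.sqrt (1 + x ^ m))) x := by
  have hm3 : (3:ℝ) ≤ (m:ℝ) := by exact_mod_cast hm
  have hxm : (0:ℝ) < x ^ m := pow_pos hx m
  have h1xm : (0:ℝ) < 1 + x ^ m := by linarith
  have hD0 : 0 < Real.sqrt (1 + x^m) := Real.sqrt_pos.2 h1xm
  have hu : HasDerivAt (fun x : ℝ => x ^ ((m:ℝ)/2-1)) (((m:ℝ)/2-1) * x ^ ((m:ℝ)/2-1-1)) x :=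
    Real.hasDerivAt_rpow_const (Or.inl hx.ne')
  have hw : HasDerivAt (fun x : ℝ => 1 + x^m) ((m:ℝ) * x ^ (m-1)) x := by
    simpa using (hasDerivAt_pow m x).const_add 1
  have hsq : HasDerivAt (fun x : ℝ => Real.sqrt (1 + x^m))
      ((m:ℝ) * x ^ (m-1) / (2 * Real.sqrt (1 + x^m))) x := hw.sqrt h1xm.ne'
  have hv : HasDerivAt (fun x : ℝ => Real.sqrt (1 + x^m) + 1)
      ((m:ℝ) * x ^ (m-1) / (2 * Real.sqrt (1 + x^m))) x := hsq.add_const 1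
  have hvne : Real.sqrt (1 + x^m) + 1 ≠ 0 := by positivity
  have hdiv := (hu.div hv hvne).const_mul (-(2/((m:ℝ)+2)))
  refine hdiv.congr_deriv ?_
  -- now pure algebra
  set s := x ^ ((m:ℝ)/2) with hs_def
  have hs : 0 < s := Real.rpow_pos_of_pos hx _
  have hs2 : s ^ 2 = x ^ m := pow_half_sq m x hx.le
  set D := Real.sqrt (1 + x ^ m) with hD_def
  have hD2 : D ^ 2 = 1 + x ^ m := Real.sq_sqrt h1xm.le
  have hsD : s ^ 2 = D ^ 2 - 1 := by rw [hs2, hD2]; ring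
  have e1 : x ^ ((m:ℝ)/2 - 2) = s / x ^ 2 := by
    rw [hs_def, ← Real.rpow_natCast x 2, ← Real.rpow_sub hx]; norm_num
  have e2 : x ^ ((m:ℝ)/2 - 1 - 1) = s / x ^ 2 := by
    rw [hs_def, ← Real.rpow_natCast x 2, ← Real.rpow_sub hx]; congr 1; ring
  have e3 : x ^ ((m:ℝ)/2 - 1) = s / x := by
    rw [hs_def, eq_div_iff hx.ne', ← Real.rpow_add_one hx.ne']
    norm_num
  have e4 : (x:ℝ) ^ (m-1) = s^2 / x := by
    rw [hs2, eq_div_iff hx.ne', ← pow_succ]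
    congr 1
    omega
  rw [e1, e2, e3, e4]
  have hm2 : (m:ℝ) + 2 ≠ 0 := by linarith
  have hDne : D ≠ 0 := hD0.ne'
  field_simp
  ring_nf
  linear_combination (m:ℝ) * hsD

lemma ftc_step (m : ℕ) (hm : 3 ≤ m) :
    ∫ x in Ioi (0:ℝ), x ^ ((m:ℝ)/2 - 2) / (Real.sqrt (1 + x ^ m) + 1) =
    ((m:ℝ)/((m:ℝ)+2)) * ∫ x in Ioi (0:ℝ), x ^ ((m:ℝ)/2 - 2) / Real.sqrt (1 + x ^ m) := by
  have hm3 : (3:ℝ) ≤ (m:ℝ) := by exact_mod_cast hm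
  have hpsi1 := integrable_psi m hm 1 zero_le_one
  have hpsi0 : IntegrableOn (fun x : ℝ => x ^ ((m:ℝ)/2 - 2) / Real.sqrt (1 + x ^ m)) (Ioi 0) := by
    simpa using integrable_psi m hm 0 le_rfl
  have key : ∫ x in Ioi (0:ℝ), (x ^ ((m:ℝ)/2 - 2) / (Real.sqrt (1 + x ^ m) + 1)
      - ((m:ℝ)/((m:ℝ)+2)) * (x ^ ((m:ℝ)/2 - 2) / Real.sqrt (1 + x ^ m))) = 0 := by
    have hcont : ContinuousWithinAt
        (fun x : ℝ => -(2/((m:ℝ)+2)) * (x ^ ((m:ℝ)/2 - 1) / (Real.sqrt (1 + x^m) + 1)))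
        (Ici 0) 0 := by
      apply ContinuousAt.continuousWithinAt
      have h1 : ContinuousAt (fun x : ℝ => x ^ ((m:ℝ)/2 - 1)) 0 :=
        Real.continuousAt_rpow_const 0 _ (Or.inr (by linarith))
      have h2 : ContinuousAt (fun x : ℝ => Real.sqrt (1 + x^m) + 1) 0 :=
        (((Real.continuous_sqrt.comp (continuous_const.add (continuous_pow m))).add
          continuous_const)).continuousAt
      have h3 : Real.sqrt (1 + (0:ℝ)^m) + 1 ≠ 0 := by
        have : (0:ℝ) ^ m = 0 := zero_pow (by omega)
        rw [this]
        norm_num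
      exact (h1.div h2 h3).const_mul _
    have htend : Tendsto
        (fun x : ℝ => -(2/((m:ℝ)+2)) * (x ^ ((m:ℝ)/2 - 1) / (Real.sqrt (1 + x^m) + 1)))
        atTop (𝓝 0) := by
      have hk : (0:ℝ) < 2/((m:ℝ)+2) := by positivity
      apply tendsto_of_tendsto_of_tendsto_of_le_of_le'
        (g := fun x : ℝ => -((2/((m:ℝ)+2)) * x⁻¹)) (h := fun _ : ℝ => (0:ℝ))
      · rw [show (0:ℝ) = -((2/((m:ℝ)+2)) * 0) by ring]
        exact (tendsto_inv_atTop_zero.const_mul _).neg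
      · exact tendsto_const_nhds
      · filter_upwards [eventually_ge_atTop (1:ℝ)] with x hx1
        have hx0 : (0:ℝ) < x := lt_of_lt_of_le one_pos hx1
        have hD : 0 ≤ Real.sqrt (1 + x^m) := Real.sqrt_nonneg _
        have hnum : 0 ≤ x ^ ((m:ℝ)/2 - 1) := Real.rpow_nonneg hx0.le _
        have hb : x ^ ((m:ℝ)/2 - 1) / (Real.sqrt (1 + x^m) + 1) ≤ x⁻¹ := by
          rw [div_le_iff₀ (by linarith [D_ge_pow m x hx0.le,
            Real.rpow_pos_of_pos hx0 ((m:ℝ)/2)])]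
          have h2 : x ^ ((m:ℝ)/2 - 1) * x = x ^ ((m:ℝ)/2) := by
            rw [← Real.rpow_add_one hx0.ne']; norm_num
          rw [inv_mul_eq_div, le_div_iff₀ hx0, h2]
          linarith [D_ge_pow m x hx0.le]
        nlinarith [hb]
      · filter_upwards [eventually_ge_atTop (1:ℝ)] with x hx1
        have hx0 : (0:ℝ) < x := lt_of_lt_of_le one_pos hx1
        have hD : 0 ≤ Real.sqrt (1 + x^m) := Real.sqrt_nonneg _
        have hnum : 0 ≤ x ^ ((m:ℝ)/2 - 1) := Real.rpow_nonneg hx0.le _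
        have : 0 ≤ x ^ ((m:ℝ)/2 - 1) / (Real.sqrt (1 + x^m) + 1) := by positivity
        nlinarith [this]
    have hint : IntegrableOn (fun x : ℝ => x ^ ((m:ℝ)/2 - 2) / (Real.sqrt (1 + x ^ m) + 1)
        - ((m:ℝ)/((m:ℝ)+2)) * (x ^ ((m:ℝ)/2 - 2) / Real.sqrt (1 + x ^ m))) (Ioi 0) :=
      hpsi1.sub (hpsi0.const_mul _)
    rw [integral_Ioi_of_hasDerivAt_of_tendsto hcont
      (fun x hx => hasDerivAt_G m hm x hx) hint htend]
    have h0m : (0:ℝ) ^ m = 0 := zero_pow (by omega)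
    have h0r : (0:ℝ) ^ ((m:ℝ)/2 - 1) = 0 := Real.zero_rpow (by linarith)
    rw [h0m, h0r]
    norm_num
  rw [integral_sub hpsi1 (hpsi0.const_mul _)] at key
  rw [integral_const_mul] at key
  linarith [key]


-- step 4: y = x^m substitution
lemma sub_rpow (m : ℕ) (hm : 3 ≤ m) :
    ∫ y in Ioi (0:ℝ), y ^ ((1:ℝ)/2 - 1/(m:ℝ) - 1) * (1+y) ^ (-(1/2) : ℝ) =
    (m:ℝ) * ∫ x in Ioi (0:ℝ), x ^ ((m:ℝ)/2 - 2) / Real.sqrt (1 + x ^ m) := by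
  have hm0 : (0:ℝ) < (m:ℝ) := by positivity
  rw [← integral_comp_rpow_Ioi_of_pos
    (g := fun y => y ^ ((1:ℝ)/2 - 1/(m:ℝ) - 1) * (1+y) ^ (-(1/2) : ℝ)) hm0,
    ← integral_const_mul]
  refine setIntegral_congr_fun measurableSet_Ioi fun x hx => ?_
  have hx0 : (0:ℝ) < x := hx
  have hxm : (0:ℝ) < x ^ m := pow_pos hx0 m
  have e0 : x ^ ((m:ℝ)) = x ^ m := Real.rpow_natCast x m
  have e1 : (x ^ ((m:ℝ))) ^ ((1:ℝ)/2 - 1/(m:ℝ) - 1) = x ^ (-(m:ℝ)/2 - 1) := by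
    rw [← Real.rpow_mul hx0.le]
    congr 1
    field_simp
    ring
  have e2 : (1 + x ^ ((m:ℝ))) ^ (-(1/2) : ℝ) = 1 / Real.sqrt (1 + x ^ m) := by
    rw [e0, Real.rpow_neg (by positivity), Real.sqrt_eq_rpow]
    norm_num
  have e3 : x ^ ((m:ℝ) - 1) * x ^ (-(m:ℝ)/2 - 1) = x ^ ((m:ℝ)/2 - 2) := by
    rw [← Real.rpow_add hx0]
    congr 1
    ring
  rw [smul_eq_mul]
  calc (m:ℝ) * x ^ ((m:ℝ) - 1) * ((x ^ ((m:ℝ))) ^ ((1:ℝ)/2 - 1/(m:ℝ) - 1)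
          * (1 + x ^ ((m:ℝ))) ^ (-(1/2) : ℝ))
      = (m:ℝ) * (x ^ ((m:ℝ) - 1) * x ^ (-(m:ℝ)/2 - 1) * (1 / Real.sqrt (1 + x ^ m))) := by
        rw [e1, e2]; ring
    _ = (m:ℝ) * (x ^ ((m:ℝ)/2 - 2) / Real.sqrt (1 + x ^ m)) := by rw [e3]; ring

-- step 5: u = y/(1+y)
lemma beta_Ioi_eq_Ioo (a b : ℝ) (hab : a + b = 1/2) :
    ∫ u in Ioo (0:ℝ) 1, u ^ (a-1) * (1-u) ^ (b-1) =
    ∫ y in Ioi (0:ℝ), y ^ (a-1) * (1+y) ^ (-(1/2) : ℝ) := by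
  have himg : (fun y : ℝ => y / (1+y)) '' Ioi 0 = Ioo 0 1 := by
    ext u
    constructor
    · rintro ⟨y, hy, rfl⟩
      have hy0 : (0:ℝ) < y := hy
      constructor
      · positivity
      · rw [div_lt_one (by linarith)]; linarith
    · intro hu
      refine ⟨u / (1-u), ?_, ?_⟩
      · have h2 : (0:ℝ) < 1 - u := by linarith [hu.2]
        exact mem_Ioi.2 (div_pos hu.1 h2)
      · have h1 : (0:ℝ) < 1 - u := by linarith [hu.2]
        field_simp; ring
  have hderiv : ∀ y ∈ Ioi (0:ℝ), HasDerivWithinAt (fun y : ℝ => y / (1+y))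
      (((1+y)^2)⁻¹) (Ioi 0) y := by
    intro y hy
    have hy0 : (0:ℝ) < y := hy
    have h1y : (1:ℝ) + y ≠ 0 := by linarith
    have := (hasDerivAt_id y).div ((hasDerivAt_id y).const_add 1) h1y
    simp only [id] at this
    refine this.hasDerivWithinAt.congr_deriv ?_
    field_simp; ring
  have hinj : InjOn (fun y : ℝ => y / (1+y)) (Ioi 0) := by
    intro y hy z hz h
    have hy0 : (0:ℝ) < y := hy
    have hz0 : (0:ℝ) < z := hz
    field_simp at h
    linarith
  have := integral_image_eq_integral_abs_deriv_smul measurableSet_Ioi hderiv hinj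
    (fun u => u ^ (a-1) * (1-u) ^ (b-1))
  rw [himg] at this
  rw [this]
  refine setIntegral_congr_fun measurableSet_Ioi fun y hy => ?_
  have hy0 : (0:ℝ) < y := hy
  have h1y : (0:ℝ) < 1 + y := by linarith
  have e1 : 1 - y / (1+y) = (1+y)⁻¹ := by field_simp; ring
  have e2 : (y / (1+y)) ^ (a-1) = y ^ (a-1) * (1+y) ^ (-(a-1)) := by
    rw [Real.div_rpow hy0.le h1y.le, Real.rpow_neg h1y.le, div_eq_mul_inv]
  have e3 : ((1+y)⁻¹) ^ (b-1) = (1+y) ^ (-(b-1)) := by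
    rw [← Real.rpow_neg_one (1+y), ← Real.rpow_mul h1y.le]
    congr 1; ring
  have e4 : |((1+y)^2)⁻¹| = (1+y) ^ (-(2:ℝ)) := by
    rw [abs_of_nonneg (by positivity), ← Real.rpow_natCast (1+y) 2, ← Real.rpow_neg h1y.le]
    norm_num
  rw [smul_eq_mul, e1, e2, e3, e4]
  have e5 : (1+y) ^ (-(2:ℝ)) * (y ^ (a-1) * (1+y) ^ (-(a-1)) * (1+y) ^ (-(b-1)))
      = y ^ (a-1) * ((1+y) ^ (-(2:ℝ)) * (1+y) ^ (-(a-1)) * (1+y) ^ (-(b-1))) := by ring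
  rw [e5, ← Real.rpow_add h1y, ← Real.rpow_add h1y]
  congr 2
  linarith [hab]

-- step 6: real beta evaluation
lemma beta_eval (a b : ℝ) (ha : 0 < a) (hb : 0 < b) :
    ∫ u in Ioo (0:ℝ) 1, u ^ (a-1) * (1-u) ^ (b-1) =
    Real.Gamma a * Real.Gamma b / Real.Gamma (a+b) := by
  have hC := Complex.Gamma_mul_Gamma_eq_betaIntegral
    (s := (a:ℂ)) (t := (b:ℂ)) (by simpa using ha) (by simpa using hb)
  have hbeta : Complex.betaIntegral (a:ℂ) (b:ℂ) =
      ((∫ u in (0:ℝ)..1, u ^ (a-1) * (1-u) ^ (b-1) : ℝ) : ℂ) := by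
    rw [Complex.betaIntegral, ← intervalIntegral.integral_ofReal]
    refine intervalIntegral.integral_congr fun u hu => ?_
    rw [uIcc_of_le zero_le_one] at hu
    have hu0 : (0:ℝ) ≤ u := hu.1
    have hu1 : (0:ℝ) ≤ 1 - u := by linarith [hu.2]
    rw [Complex.ofReal_mul, Complex.ofReal_cpow hu0, Complex.ofReal_cpow hu1]
    push_cast
    ring
  have hreal : ∫ u in (0:ℝ)..1, u ^ (a-1) * (1-u) ^ (b-1)
      = ∫ u in Ioo (0:ℝ) 1, u ^ (a-1) * (1-u) ^ (b-1) := by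
    rw [intervalIntegral.integral_of_le zero_le_one, integral_Ioc_eq_integral_Ioo]
  have hgamma : Complex.Gamma ((a:ℂ) + (b:ℂ)) = ((Real.Gamma (a+b) : ℝ) : ℂ) := by
    rw [← Complex.ofReal_add, Complex.Gamma_ofReal]
  rw [hbeta, hgamma, Complex.Gamma_ofReal, Complex.Gamma_ofReal] at hC
  have hab : (0:ℝ) < Real.Gamma (a+b) := Real.Gamma_pos_of_pos (by linarith)
  rw [← hreal]
  have := hC
  rw [← Complex.ofReal_mul, ← Complex.ofReal_mul] at this
  have h2 : Real.Gamma a * Real.Gamma b = Real.Gamma (a+b) * ∫ u in (0:ℝ)..1, u ^ (a-1) * (1-u) ^ (b-1) :=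
    Complex.ofReal_injective this
  rw [h2]
  field_simp

noncomputable def realBeta (x y : ℝ) : ℝ := Real.Gamma x * Real.Gamma y / Real.Gamma (x + y)

theorem stmt_0 (m : ℕ) (hm : 3 ≤ m) :
    IntegrableOn (fun t : ℝ => Real.sqrt (1 + t ^ m) - t ^ ((m : ℝ) / 2)) (Ioi 0) ∧
    ∫ t in Ioi (0 : ℝ), (Real.sqrt (1 + t ^ m) - t ^ ((m : ℝ) / 2)) =
      realBeta (1 / 2) (1 + 1 / m) / (2 * Real.cos (π / m)) := by
  have hm3 : (3:ℝ) ≤ (m:ℝ) := by exact_mod_cast hm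
  have hm0 : (0:ℝ) < (m:ℝ) := by linarith
  refine ⟨integrable_f m hm, ?_⟩
  rw [inv_step m hm, ftc_step m hm]
  have hB : ∫ x in Ioi (0:ℝ), x ^ ((m:ℝ)/2 - 2) / Real.sqrt (1 + x ^ m)
      = (1/(m:ℝ)) * ∫ y in Ioi (0:ℝ), y ^ ((1:ℝ)/2 - 1/(m:ℝ) - 1) * (1+y) ^ (-(1/2) : ℝ) := by
    rw [sub_rpow m hm]
    field_simp
  rw [hB]
  have hab : (1/2 - 1/(m:ℝ)) + (1/(m:ℝ)) = 1/2 := by ring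
  have h13 : 1/(m:ℝ) ≤ 1/3 := by
    rw [div_le_div_iff₀ hm0 (by norm_num)]
    linarith
  have ha : 0 < 1/2 - 1/(m:ℝ) := by linarith
  have hY : ∫ y in Ioi (0:ℝ), y ^ ((1:ℝ)/2 - 1/(m:ℝ) - 1) * (1+y) ^ (-(1/2) : ℝ)
      = Real.Gamma (1/2 - 1/(m:ℝ)) * Real.Gamma (1/(m:ℝ))
        / Real.Gamma ((1/2 - 1/(m:ℝ)) + (1/(m:ℝ))) := by
    rw [← beta_Ioi_eq_Ioo (1/2 - 1/(m:ℝ)) (1/(m:ℝ)) hab,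
      beta_eval (1/2 - 1/(m:ℝ)) (1/(m:ℝ)) ha (by positivity)]
  rw [hY, hab, realBeta]
  set r := 1/(m:ℝ) with hr_def
  have hr : 0 < r := by positivity
  have hrefl := Real.Gamma_mul_Gamma_one_sub (1/2 - r)
  rw [show (1:ℝ) - (1/2 - r) = 1/2 + r by ring] at hrefl
  rw [show π * (1/2 - r) = π/2 - π*r by ring, Real.sin_pi_div_two_sub] at hrefl
  rw [show π * r = π / (m:ℝ) by rw [hr_def]; ring] at hrefl
  have hcos : 0 < Real.cos (π / (m:ℝ)) := by
    apply Real.cos_pos_of_mem_Ioo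
    constructor
    · have h1 : 0 < π / (m:ℝ) := by positivity
      linarith [pi_pos]
    · have h2 : π / (m:ℝ) ≤ π / 3 :=
        div_le_div_of_nonneg_left pi_pos.le (by norm_num) hm3
      linarith [pi_pos]
  have hG1 : Real.Gamma (1 + r) = r * Real.Gamma r := by
    rw [add_comm]
    exact Real.Gamma_add_one hr.ne'
  have hG2 : Real.Gamma (1/2 + (1 + r)) = (1/2 + r) * Real.Gamma (1/2 + r) := by
    rw [show (1/2 + (1 + r) : ℝ) = (1/2 + r) + 1 by ring]
    exact Real.Gamma_add_one (by positivity)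
  have hGr : 0 < Real.Gamma r := Real.Gamma_pos_of_pos hr
  have hGhalfr : 0 < Real.Gamma (1/2 + r) := Real.Gamma_pos_of_pos (by positivity)
  have hGhalf : Real.Gamma (1/2 : ℝ) = Real.sqrt π := Real.Gamma_one_half_eq
  have hGsub : Real.Gamma (1/2 - r) = π / (Real.Gamma (1/2 + r) * Real.cos (π / (m:ℝ))) := by
    rw [eq_div_iff hcos.ne'] at hrefl
    rw [eq_div_iff (by positivity)]
    linear_combination hrefl
  rw [hG1, hG2, hGhalf, hGsub]
  set c := Real.cos (π / (m:ℝ)) with hc_def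
  set S := Real.sqrt π with hS_def
  have hSpos : 0 < S := Real.sqrt_pos.2 pi_pos
  have hS2 : π = S^2 := (Real.sq_sqrt pi_pos.le).symm
  rw [hS2]
  rw [hr_def]
  have hGr' : Real.Gamma ((m:ℝ)⁻¹) ≠ 0 := by
    rw [← one_div]; exact hGr.ne'
  field_simp
end

section
/- For every integer m ≥ 3, the substitution √u = √(1+t^m) − t^{m/2} transforms ∫₀^∞ (√(1+t^m) − t^{m/2}) dt into (1/(2^{2/m} m)) · (B(2/m, 1/2 − 1/m) + B(2/m, 3/2 − 1/m)), and hence ∫₀^∞ (√(1+t^m) − t^{m/2}) dt = (1/(2^{2/m} m)) · (B(2/m, 1/2 − 1/m) + B(2/m, 3/2 − 1/m)). -/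
open Real MeasureTheory Set Filter Topology

lemma complexBeta_eq (x y : ℝ) (_hx : 0 < x) (_hy : 0 < y) :
    Complex.betaIntegral x y
      = ((∫ u in Ioo (0:ℝ) 1, u ^ (x-1) * (1-u) ^ (y-1) : ℝ) : ℂ) := by
  rw [Complex.betaIntegral, intervalIntegral.integral_of_le zero_le_one,
      MeasureTheory.integral_Ioc_eq_integral_Ioo]
  have step : ∫ u in Ioo (0:ℝ) 1, (u:ℂ) ^ ((x:ℂ)-1) * (1-(u:ℂ)) ^ ((y:ℂ)-1)
      = ∫ u in Ioo (0:ℝ) 1, ((u ^ (x-1) * (1-u) ^ (y-1) : ℝ) : ℂ) := by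
    refine setIntegral_congr_fun measurableSet_Ioo (fun u hu => ?_)
    rw [Complex.ofReal_mul, Complex.ofReal_cpow hu.1.le,
        Complex.ofReal_cpow (by linarith [hu.2] : (0:ℝ) ≤ 1 - u)]
    push_cast
    ring
  rw [step]
  exact integral_ofReal

lemma betaIntegrable (x y : ℝ) (hx : 0 < x) (hy : 0 < y) :
    IntegrableOn (fun u : ℝ => u ^ (x-1) * (1-u) ^ (y-1)) (Ioo 0 1) := by
  have h := Complex.betaIntegral_convergent (u := x) (v := y) (by simpa) (by simpa)
  have h2 : IntegrableOn (fun u : ℝ => (u:ℂ) ^ ((x:ℂ)-1) * (1-(u:ℂ)) ^ ((y:ℂ)-1)) (Ioo 0 1) :=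
    ((intervalIntegrable_iff_integrableOn_Ioc_of_le zero_le_one).mp h).mono_set
      Ioo_subset_Ioc_self
  have h3 : IntegrableOn (fun u : ℝ => ((u ^ (x-1) * (1-u) ^ (y-1) : ℝ) : ℂ)) (Ioo 0 1) := by
    refine h2.congr_fun (fun u hu => ?_) measurableSet_Ioo
    rw [Complex.ofReal_mul, Complex.ofReal_cpow hu.1.le,
        Complex.ofReal_cpow (by linarith [hu.2] : (0:ℝ) ≤ 1 - u)]
    push_cast
    ring
  simpa [IntegrableOn] using h3.re

lemma realBeta_eq (x y : ℝ) (hx : 0 < x) (hy : 0 < y) :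
    ∫ u in Ioo (0:ℝ) 1, u ^ (x-1) * (1-u) ^ (y-1) = realBeta x y := by
  have h := Complex.Gamma_mul_Gamma_eq_betaIntegral (s := (x:ℂ)) (t := (y:ℂ))
    (by simpa) (by simpa)
  rw [complexBeta_eq x y hx hy, ← Complex.ofReal_add, Complex.Gamma_ofReal,
      Complex.Gamma_ofReal, Complex.Gamma_ofReal, ← Complex.ofReal_mul,
      ← Complex.ofReal_mul] at h
  have h' : Real.Gamma x * Real.Gamma y
      = Real.Gamma (x+y) * ∫ u in Ioo (0:ℝ) 1, u ^ (x-1) * (1-u) ^ (y-1) :=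
    Complex.ofReal_injective h
  have hΓ : Real.Gamma (x+y) ≠ 0 := (Real.Gamma_pos_of_pos (by linarith)).ne'
  rw [realBeta, h']
  field_simp

theorem stmt_1 (m : ℕ) (hm : 3 ≤ m) :
    ∫ t in Ioi (0 : ℝ), (Real.sqrt (1 + t ^ m) - t ^ ((m : ℝ) / 2)) =
      (1 / (2 ^ ((2 : ℝ) / m) * m)) *
        (realBeta (2 / m) (1 / 2 - 1 / m) + realBeta (2 / m) (3 / 2 - 1 / m)) := by
  set c : ℝ := (m : ℝ) with hcdef
  have hc3 : (3:ℝ) ≤ c := by rw [hcdef]; exact_mod_cast hm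
  have hc0 : (0:ℝ) < c := by linarith
  set b : ℝ := 1/c with hbdef
  set a : ℝ := 2/c with hadef
  have hb0 : 0 < b := by rw [hbdef]; positivity
  have hb3 : b ≤ 1/3 := by
    rw [hbdef, div_le_div_iff₀ hc0 (by norm_num)]; linarith
  have ha0 : 0 < a := by rw [hadef]; positivity
  have hab : a = 2*b := by rw [hadef, hbdef]; ring
  have hac : a * c = 2 := by rw [hadef]; field_simp
  have hbc : b * c = 1 := by rw [hbdef]; field_simp
  set f : ℝ → ℝ := fun u => 2^(-a) * ((1-u)^a * u^(-b)) with hfdef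
  set F : ℝ → ℝ :=
    fun u => -(2^(-a) * (a * ((1-u)^(a-1) * u^(-b)) + b * ((1-u)^a * u^(-b-1)))) with hFdef
  -- derivative
  have hderiv : ∀ u ∈ Ioo (0:ℝ) 1, HasDerivAt f (F u) u := by
    intro u hu
    obtain ⟨hu0, hu1⟩ := hu
    have h1u : (0:ℝ) < 1 - u := by linarith
    have d1 : HasDerivAt (fun v : ℝ => (1-v)^a) (a * (1-u)^(a-1) * (-1)) u := by
      exact (Real.hasDerivAt_rpow_const (x := 1-u) (p := a) (Or.inl h1u.ne')).comp u
        ((hasDerivAt_id u).const_sub 1)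
    have d2 : HasDerivAt (fun v : ℝ => v^(-b)) (-b * u^(-b-1)) u :=
      Real.hasDerivAt_rpow_const (x := u) (p := -b) (Or.inl hu0.ne')
    have d3 := HasDerivAt.const_mul ((2:ℝ)^(-a)) (d1.mul d2)
    refine d3.congr_deriv ?_
    rw [hFdef]
    ring
  have hfpos : ∀ u ∈ Ioo (0:ℝ) 1, 0 < f u := by
    intro u hu
    have h1u : (0:ℝ) < 1 - u := by linarith [hu.2]
    exact mul_pos (rpow_pos_of_pos two_pos _)
      (mul_pos (rpow_pos_of_pos h1u _) (rpow_pos_of_pos hu.1 _))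
  have hFneg : ∀ u ∈ Ioo (0:ℝ) 1, F u < 0 := by
    intro u hu
    have h1u : (0:ℝ) < 1 - u := by linarith [hu.2]
    have : 0 < 2^(-a) * (a * ((1-u)^(a-1) * u^(-b)) + b * ((1-u)^a * u^(-b-1))) :=
      mul_pos (rpow_pos_of_pos two_pos _)
        (add_pos
          (mul_pos ha0 (mul_pos (rpow_pos_of_pos h1u _) (rpow_pos_of_pos hu.1 _)))
          (mul_pos hb0 (mul_pos (rpow_pos_of_pos h1u _) (rpow_pos_of_pos hu.1 _))))
    rw [hFdef]
    simpa using this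
  have hcont : ContinuousOn f (Ioo 0 1) :=
    fun u hu => (hderiv u hu).continuousAt.continuousWithinAt
  have hanti : StrictAntiOn f (Ioo 0 1) := by
    refine strictAntiOn_of_deriv_neg (convex_Ioo 0 1) hcont ?_
    rw [interior_Ioo]
    intro u hu
    rw [(hderiv u hu).deriv]
    exact hFneg u hu
  have hinj : InjOn f (Ioo 0 1) := hanti.injOn
  -- image
  have himg : f '' Ioo 0 1 = Ioi 0 := by
    apply Subset.antisymm
    · rintro t ⟨u, hu, rfl⟩
      exact hfpos u hu
    · intro t ht
      have ht' : (0:ℝ) < t := ht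
      -- limit at 0⁺ : atTop
      have htop : Tendsto f (𝓝[>] (0:ℝ)) atTop := by
        have h1 : Tendsto (fun u : ℝ => 2^(-a) * (1-u)^a) (𝓝[>] (0:ℝ)) (𝓝 (2^(-a))) := by
          have hca : ContinuousAt (fun u : ℝ => 2^(-a) * (1-u)^a) 0 := by
            refine ContinuousAt.mul continuousAt_const ?_
            exact ContinuousAt.rpow_const (continuous_const.sub continuous_id).continuousAt
              (Or.inl (by norm_num))
          have := hca.tendsto.mono_left (nhdsWithin_le_nhds (s := Ioi (0:ℝ)))
          simpa using this
        have h2 : Tendsto (fun u : ℝ => u^(-b)) (𝓝[>] (0:ℝ)) atTop := by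
          have h2a : Tendsto (fun u : ℝ => (u⁻¹)^b) (𝓝[>] (0:ℝ)) atTop :=
            (tendsto_rpow_atTop hb0).comp tendsto_inv_nhdsGT_zero
          refine h2a.congr' ?_
          filter_upwards [eventually_mem_nhdsWithin] with u hu
          rw [Real.inv_rpow (le_of_lt hu), ← Real.rpow_neg (le_of_lt hu)]
        have h3 := h1.pos_mul_atTop (rpow_pos_of_pos two_pos _) h2
        refine h3.congr (fun u => ?_)
        rw [hfdef]; ring
      -- limit at 1⁻ : 0
      have hbot : Tendsto f (𝓝[<] (1:ℝ)) (𝓝 0) := by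
        have hca : ContinuousAt f 1 := by
          rw [hfdef]
          refine ContinuousAt.mul continuousAt_const (ContinuousAt.mul ?_ ?_)
          · exact ContinuousAt.rpow_const (continuous_const.sub continuous_id).continuousAt
              (Or.inr ha0.le)
          · exact ContinuousAt.rpow_const continuous_id.continuousAt (Or.inl one_ne_zero)
        have hval : f 1 = 0 := by
          rw [hfdef]
          simp [Real.zero_rpow ha0.ne']
        have := hca.tendsto.mono_left (nhdsWithin_le_nhds (s := Iio (1:ℝ)))
        rwa [hval] at this
      obtain ⟨u₂, hu₂t, hu₂⟩ :=
        ((hbot.eventually_lt_const ht').and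
          (eventually_of_mem (Ioo_mem_nhdsLT_of_mem (by norm_num : (1:ℝ) ∈ Ioc 0 1))
            (fun x hx => hx))).exists
      obtain ⟨u₁, hu₁t, hu₁⟩ :=
        ((htop.eventually_gt_atTop t).and
          (eventually_of_mem (Ioo_mem_nhdsGT_of_mem (show (0:ℝ) ∈ Ico 0 u₂ from ⟨le_refl _, hu₂.1⟩))
            (fun x hx => hx))).exists
      have hsub : Icc u₁ u₂ ⊆ Ioo 0 1 :=
        fun v hv => ⟨lt_of_lt_of_le hu₁.1 hv.1, lt_of_le_of_lt hv.2 hu₂.2⟩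
      have hIVT := intermediate_value_Icc' (le_of_lt hu₁.2) (hcont.mono hsub)
      exact Set.image_mono hsub (hIVT ⟨hu₂t.le, hu₁t.le⟩)
  -- substitution
  have hsubst : ∫ t in Ioi (0:ℝ), (Real.sqrt (1 + t ^ m) - t ^ (c / 2))
      = ∫ u in Ioo (0:ℝ) 1, |F u| • (Real.sqrt (1 + (f u) ^ m) - (f u) ^ (c / 2)) := by
    have key := integral_image_eq_integral_abs_deriv_smul measurableSet_Ioo
      (fun u hu => (hderiv u hu).hasDerivWithinAt) hinj
      (fun t => Real.sqrt (1 + t ^ m) - t ^ (c / 2))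
    rw [himg] at key
    exact key
  rw [hsubst]
  -- pointwise identity
  have hpt : ∀ u ∈ Ioo (0:ℝ) 1,
      |F u| • (Real.sqrt (1 + (f u) ^ m) - (f u) ^ (c / 2))
        = 2^(-a)*a * (u ^ (3/2-b-1) * (1-u) ^ (a-1))
          + 2^(-a)*b * (u ^ (1/2-b-1) * (1-u) ^ (a+1-1)) := by
    intro u hu
    obtain ⟨hu0, hu1⟩ := hu
    have h1u : (0:ℝ) < 1 - u := by linarith
    have hfu : 0 < f u := hfpos u ⟨hu0, hu1⟩
    -- (f u) ^ m = (1-u)^2 / (4*u)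
    have e1 : (f u) ^ m = ((2:ℝ)^(-a))^c * (((1-u)^a)^c * ((u)^(-b))^c) := by
      rw [← Real.rpow_natCast (f u) m, hfdef]
      rw [Real.mul_rpow (by positivity) (mul_nonneg (Real.rpow_nonneg h1u.le _)
            (Real.rpow_nonneg hu0.le _)),
          Real.mul_rpow (Real.rpow_nonneg h1u.le _) (Real.rpow_nonneg hu0.le _)]
    have e2 : ((2:ℝ)^(-a))^c = 1/4 := by
      rw [← Real.rpow_mul (by norm_num : (0:ℝ) ≤ 2), show -a*c = (-2:ℝ) by rw [neg_mul, hac],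
          Real.rpow_neg (by norm_num : (0:ℝ) ≤ 2), Real.rpow_two]
      norm_num
    have e3 : ((1-u:ℝ)^a)^c = (1-u)^2 := by
      rw [← Real.rpow_mul h1u.le, hac, Real.rpow_two]
    have e4 : ((u:ℝ)^(-b))^c = u⁻¹ := by
      rw [← Real.rpow_mul hu0.le, show -b*c = (-1:ℝ) by rw [neg_mul, hbc], Real.rpow_neg_one]
    have hfm : (f u) ^ m = (1-u)^2 / (4*u) := by
      rw [e1, e2, e3, e4]; field_simp
    have h1fm : 1 + (f u) ^ m = (1+u)^2 / (4*u) := by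
      rw [hfm]; field_simp; ring
    have hsq4 : Real.sqrt u ≠ 0 := by positivity
    have hsqrt1 : Real.sqrt (1 + (f u) ^ m) = (1+u)/(2*Real.sqrt u) := by
      rw [h1fm, show (1+u)^2/(4*u) = ((1+u)/(2*Real.sqrt u))^2 by
            rw [div_pow, mul_pow, Real.sq_sqrt hu0.le]; norm_num]
      exact Real.sqrt_sq (div_nonneg (by linarith) (by positivity))
    have hhalf : (f u) ^ (c/2) = (1-u)/(2*Real.sqrt u) := by
      rw [show c/2 = c*(1/2:ℝ) by ring, Real.rpow_mul hfu.le, Real.rpow_natCast (f u) m, hfm,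
          ← Real.sqrt_eq_rpow, show (1-u)^2/(4*u) = ((1-u)/(2*Real.sqrt u))^2 by
            rw [div_pow, mul_pow, Real.sq_sqrt hu0.le]; norm_num]
      exact Real.sqrt_sq (div_nonneg (by linarith) (by positivity))
    have hgf : Real.sqrt (1 + (f u) ^ m) - (f u) ^ (c/2) = Real.sqrt u := by
      rw [hsqrt1, hhalf, div_sub_div_same, show (1+u) - (1-u) = 2*u by ring,
          mul_div_mul_left _ _ (by norm_num : (2:ℝ) ≠ 0)]
      exact Real.div_sqrt
    have habs : |F u| = 2^(-a) * (a * ((1-u)^(a-1) * u^(-b)) + b * ((1-u)^a * u^(-b-1))) := by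
      rw [abs_of_nonpos (hFneg u ⟨hu0, hu1⟩).le, hFdef, neg_neg]
    rw [smul_eq_mul, hgf, habs, Real.sqrt_eq_rpow]
    rw [show (3/2-b-1:ℝ) = -b + 1/2 by ring, show (1/2-b-1:ℝ) = (-b-1) + 1/2 by ring,
        show (a+1-1:ℝ) = a from by ring, Real.rpow_add hu0, Real.rpow_add hu0]
    ring
  rw [setIntegral_congr_fun measurableSet_Ioo hpt]
  -- separate and evaluate beta pieces
  have hx1 : (0:ℝ) < 3/2 - b := by linarith
  have hx2 : (0:ℝ) < 1/2 - b := by linarith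
  have i1 : IntegrableOn (fun u : ℝ => u ^ (3/2-b-1) * (1-u) ^ (a-1)) (Ioo 0 1) :=
    betaIntegrable (3/2-b) a hx1 ha0
  have i2 : IntegrableOn (fun u : ℝ => u ^ (1/2-b-1) * (1-u) ^ (a+1-1)) (Ioo 0 1) :=
    betaIntegrable (1/2-b) (a+1) hx2 (by linarith)
  have v1 : ∫ u in Ioo (0:ℝ) 1, u ^ (3/2-b-1) * (1-u) ^ (a-1) = realBeta (3/2-b) a :=
    realBeta_eq (3/2-b) a hx1 ha0
  have v2 : ∫ u in Ioo (0:ℝ) 1, u ^ (1/2-b-1) * (1-u) ^ (a+1-1) = realBeta (1/2-b) (a+1) :=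
    realBeta_eq (1/2-b) (a+1) hx2 (by linarith)
  rw [integral_add (i1.const_mul _) (i2.const_mul _), integral_const_mul, integral_const_mul,
      v1, v2]
  -- final Gamma algebra
  have hG2b : Real.Gamma (2*b) ≠ 0 := (Real.Gamma_pos_of_pos (by linarith)).ne'
  have hGm : Real.Gamma (1/2-b) ≠ 0 := (Real.Gamma_pos_of_pos hx2).ne'
  have hGp : Real.Gamma (1/2+b) ≠ 0 := (Real.Gamma_pos_of_pos (by linarith)).ne'
  have hcb : c = 1/b := by rw [hbdef, one_div_one_div]
  simp only [realBeta]
  rw [hab, hcb]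
  rw [show (3/2-b+2*b:ℝ) = (1/2+b)+1 by ring, show (1/2-b+(2*b+1):ℝ) = (1/2+b)+1 by ring,
      show (2*b+(1/2-b):ℝ) = 1/2+b by ring, show (2*b+(3/2-b):ℝ) = (1/2+b)+1 by ring,
      show (3/2-b:ℝ) = (1/2-b)+1 by ring, Real.Gamma_add_one (by linarith : (1/2:ℝ)+b ≠ 0),
      Real.Gamma_add_one hx2.ne', Real.Gamma_add_one (by linarith : (2:ℝ)*b ≠ 0),
      Real.rpow_neg (by norm_num : (0:ℝ) ≤ 2)]
  have h2a : ((2:ℝ)^(2*b)) ≠ 0 := (rpow_pos_of_pos two_pos _).ne'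
  field_simp
  ring
end

section
/- Let m ≥ 3 and j, k integers with 1 ≤ k ≤ j < (m+2)/2 and j ≠ 1. Then the recursion ∫₀^∞ ( t^{mk−j}/(1+t^m)^{k−1/2} − t^{m/2−j} ) dt = ((m(k−1)−(j−1))/(m(k−1)−m/2)) · ∫₀^∞ ( t^{m(k−1)−j}/(1+t^m)^{(k−1)−1/2} − t^{m/2−j} ) dt holds for k ≥ 2. -/
open Real MeasureTheory Set Filter Topology

private lemma bern {b u : ℝ} (hb : 0 < b) (hu : 0 ≤ u) : 1 - b * u ≤ (1 + u) ^ (-b) := by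
  have h1u : (0:ℝ) < 1 + u := by linarith
  rcases le_total b 1 with hb1 | hb1
  · have h := rpow_one_add_le_one_add_mul_self (by linarith : (-1:ℝ) ≤ u) hb.le hb1
    have hpos : (0:ℝ) < (1+u) ^ b := rpow_pos_of_pos h1u b
    rw [Real.rpow_neg h1u.le, ← one_div, le_div_iff₀ hpos]
    nlinarith [sq_nonneg (b*u)]
  · have hv1 : (-1:ℝ) ≤ -(u / (1+u)) := by
      have : u / (1+u) ≤ 1 := by rw [div_le_one h1u]; linarith
      linarith
    have h := one_add_mul_self_le_rpow_one_add hv1 hb1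
    have h1v : 1 + -(u / (1+u)) = (1+u)⁻¹ := by field_simp; ring
    rw [h1v, Real.inv_rpow h1u.le, ← Real.rpow_neg h1u.le] at h
    have hdu : u / (1+u) ≤ u := div_le_self hu (by linarith)
    nlinarith

private lemma boundA {M b : ℝ} (hM : 0 < M) (hb : 0 < b) (a : ℝ) {t : ℝ} (ht : 1 ≤ t) :
    |t ^ a * (1 + t ^ M) ^ (-b) - t ^ (a - M * b)| ≤ b * t ^ (a - M * b - M) := by
  have ht0 : (0:ℝ) < t := lt_of_lt_of_le one_pos ht
  have hu0 : (0:ℝ) < t ^ (-M) := rpow_pos_of_pos ht0 _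
  have hsplit : t ^ a * (1 + t ^ M) ^ (-b) = t ^ (a - M * b) * (1 + t ^ (-M)) ^ (-b) := by
    have h1 : (1 + t ^ M) = t ^ M * (1 + t ^ (-M)) := by
      rw [mul_add, mul_one, ← Real.rpow_add ht0, add_neg_cancel, Real.rpow_zero, add_comm]
    rw [h1, Real.mul_rpow (rpow_nonneg ht0.le M) (by positivity),
      ← Real.rpow_mul ht0.le, ← mul_assoc, ← Real.rpow_add ht0,
      show a + M * (-b) = a - M * b by ring]
  rw [hsplit, show t ^ (a - M*b) * (1 + t ^ (-M)) ^ (-b) - t ^ (a - M*b)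
      = t ^ (a - M*b) * ((1 + t ^ (-M)) ^ (-b) - 1) by ring,
    abs_mul, abs_of_nonneg (rpow_nonneg ht0.le _)]
  have h1u : (1:ℝ) ≤ 1 + t ^ (-M) := by linarith
  have hX1 : (1 + t ^ (-M)) ^ (-b) ≤ 1 :=
    Real.rpow_le_one_of_one_le_of_nonpos h1u (by linarith)
  have habs : |(1 + t ^ (-M)) ^ (-b) - 1| ≤ b * t ^ (-M) := by
    rw [abs_sub_comm, abs_of_nonneg (by linarith)]
    have := bern hb hu0.le
    linarith
  calc t ^ (a - M*b) * |(1 + t ^ (-M)) ^ (-b) - 1|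
      ≤ t ^ (a - M*b) * (b * t ^ (-M)) :=
        mul_le_mul_of_nonneg_left habs (rpow_nonneg ht0.le _)
    _ = b * t ^ (a - M*b - M) := by
        rw [show a - M*b - M = (a - M*b) + -M by ring, Real.rpow_add ht0]; ring

private lemma contMul (M b a : ℝ) :
    ContinuousOn (fun t : ℝ => t ^ a * (1 + t ^ M) ^ (-b)) (Ioi 0) := by
  intro x hx
  have hx0 : (0:ℝ) < x := hx
  have h1 : ContinuousAt (fun t : ℝ => t ^ a) x :=
    Real.continuousAt_rpow_const x a (Or.inl hx0.ne')
  have hin : ContinuousAt (fun t : ℝ => 1 + t ^ M) x :=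
    continuousAt_const.add (Real.continuousAt_rpow_const x M (Or.inl hx0.ne'))
  have hne : (1:ℝ) + x ^ M ≠ 0 := by positivity
  exact (h1.mul (hin.rpow_const (Or.inl hne))).continuousWithinAt

private lemma contPow (c : ℝ) : ContinuousOn (fun t : ℝ => t ^ c) (Ioi (0:ℝ)) := fun x hx =>
  (Real.continuousAt_rpow_const x c (Or.inl (ne_of_gt hx))).continuousWithinAt

private lemma intB {M b a : ℝ} (hM : 0 < M) (hb : 0 < b) (ha : -1 < a) (h1 : -1 < a - M * b)
    (h2 : a - M * b - M < -1) :
    IntegrableOn (fun t : ℝ => t ^ a * (1 + t ^ M) ^ (-b) - t ^ (a - M * b)) (Ioi 0) := by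
  have hsub : Ioi (0:ℝ) = Ioc 0 1 ∪ Ioi 1 := (Set.Ioc_union_Ioi_eq_Ioi zero_le_one).symm
  rw [hsub, integrableOn_union]
  constructor
  · rw [integrableOn_Ioc_iff_integrableOn_Ioo]
    apply Integrable.sub
    · have hg : IntegrableOn (fun t : ℝ => t ^ a) (Ioo (0:ℝ) 1) :=
        (intervalIntegral.integrableOn_Ioo_rpow_iff one_pos).2 ha
      apply Integrable.mono' hg
      · exact ((contMul M b a).mono (Ioo_subset_Ioi_self)).aestronglyMeasurable measurableSet_Ioo
      · rw [ae_restrict_iff' measurableSet_Ioo]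
        refine ae_of_all _ fun x hx => ?_
        have hx0 : (0:ℝ) < x := hx.1
        have hxM : (0:ℝ) ≤ x ^ M := rpow_nonneg hx0.le M
        have hone : (1 + x ^ M) ^ (-b) ≤ 1 :=
          Real.rpow_le_one_of_one_le_of_nonpos (by linarith) (by linarith)
        rw [Real.norm_eq_abs, abs_of_nonneg (by positivity)]
        calc x ^ a * (1 + x ^ M) ^ (-b) ≤ x ^ a * 1 :=
              mul_le_mul_of_nonneg_left hone (rpow_nonneg hx0.le a)
          _ = x ^ a := mul_one _
    · exact (intervalIntegral.integrableOn_Ioo_rpow_iff one_pos).2 h1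
  · have hg : IntegrableOn (fun t : ℝ => b * t ^ (a - M*b - M)) (Ioi 1) :=
      (integrableOn_Ioi_rpow_of_lt h2 one_pos).const_mul b
    apply Integrable.mono' hg
    · exact (((contMul M b a).sub (contPow (a - M*b))).mono
        (Ioi_subset_Ioi zero_le_one)).aestronglyMeasurable measurableSet_Ioi
    · rw [ae_restrict_iff' measurableSet_Ioi]
      refine ae_of_all _ fun x hx => ?_
      rw [Real.norm_eq_abs]
      exact boundA hM hb a (le_of_lt hx)

private lemma keyLem {M b p : ℝ} (hM : 0 < M) (hb : 0 < b) (hp : 0 < p) (hq : 0 < p - M * b)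
    (hqM : p - M * b < M) :
    p * ∫ t in Ioi (0:ℝ), (t ^ (p - 1) * (1 + t ^ M) ^ (-b) - t ^ (p - M * b - 1))
      = (M * b) * ∫ t in Ioi (0:ℝ),
          (t ^ (p + M - 1) * (1 + t ^ M) ^ (-(b+1)) - t ^ (p - M * b - 1)) := by
  have hint1 : IntegrableOn
      (fun t : ℝ => t ^ (p - 1) * (1 + t ^ M) ^ (-b) - t ^ (p - M * b - 1)) (Ioi 0) := by
    have h := intB (a := p - 1) hM hb (by linarith)
      (by rw [show p - 1 - M * b = p - M*b - 1 by ring]; linarith)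
      (by rw [show p - 1 - M * b = p - M*b - 1 by ring]; linarith)
    simpa [show p - 1 - M * b = p - M*b - 1 by ring] using h
  have hint2 : IntegrableOn
      (fun t : ℝ => t ^ (p + M - 1) * (1 + t ^ M) ^ (-(b+1)) - t ^ (p - M * b - 1)) (Ioi 0) := by
    have h := intB (a := p + M - 1) (b := b + 1) hM (by linarith)
      (by linarith)
      (by rw [show p + M - 1 - M * (b+1) = p - M*b - 1 by ring]; linarith)
      (by rw [show p + M - 1 - M * (b+1) = p - M*b - 1 by ring]; linarith)
    simpa [show p + M - 1 - M * (b+1) = p - M*b - 1 by ring] using h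
  have hderiv : ∀ x ∈ Ioi (0:ℝ),
      HasDerivAt (fun t : ℝ => t ^ p * (1 + t ^ M) ^ (-b) - t ^ (p - M * b))
        (p * (x ^ (p - 1) * (1 + x ^ M) ^ (-b) - x ^ (p - M * b - 1))
          - (M * b) * (x ^ (p + M - 1) * (1 + x ^ M) ^ (-(b+1)) - x ^ (p - M * b - 1))) x := by
    intro x hx
    have hx0 : (0:ℝ) < x := hx
    have h1M : (0:ℝ) < 1 + x ^ M := by positivity
    have hA : HasDerivAt (fun t : ℝ => t ^ p) (p * x ^ (p - 1)) x :=
      Real.hasDerivAt_rpow_const (Or.inl hx0.ne')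
    have hInner : HasDerivAt (fun t : ℝ => 1 + t ^ M) (M * x ^ (M - 1)) x :=
      (Real.hasDerivAt_rpow_const (Or.inl hx0.ne')).const_add 1
    have hOuter : HasDerivAt (fun u : ℝ => u ^ (-b)) ((-b) * (1 + x ^ M) ^ (-b - 1)) (1 + x ^ M) :=
      Real.hasDerivAt_rpow_const (Or.inl h1M.ne')
    have hComp := hOuter.comp x hInner
    have hQ : HasDerivAt (fun t : ℝ => t ^ (p - M * b)) ((p - M*b) * x ^ (p - M * b - 1)) x :=
      Real.hasDerivAt_rpow_const (Or.inl hx0.ne')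
    have H := (hA.mul hComp).sub hQ
    simp only [Function.comp] at H
    convert H using 1
    all_goals try rfl
    have e1 : x ^ p * x ^ (M - 1) = x ^ (p + M - 1) := by
      rw [← Real.rpow_add hx0, show p + (M - 1) = p + M - 1 by ring]
    have e2 : (1 + x ^ M) ^ (-(b+1)) = (1 + x ^ M) ^ (-b - 1) := by ring_nf
    rw [e2]
    linear_combination (M * b * ((1 + x ^ M) ^ (-b - 1))) * e1
  have hcont : ContinuousWithinAt (fun t : ℝ => t ^ p * (1 + t ^ M) ^ (-b) - t ^ (p - M * b))
      (Ici 0) 0 := by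
    apply ContinuousAt.continuousWithinAt
    have h1 : ContinuousAt (fun t : ℝ => t ^ p) 0 :=
      Real.continuousAt_rpow_const 0 p (Or.inr hp.le)
    have h3 : ContinuousAt (fun t : ℝ => t ^ (p - M * b)) 0 :=
      Real.continuousAt_rpow_const 0 (p - M*b) (Or.inr hq.le)
    have hin : ContinuousAt (fun t : ℝ => 1 + t ^ M) 0 :=
      continuousAt_const.add (Real.continuousAt_rpow_const 0 M (Or.inr hM.le))
    have h2 : ContinuousAt (fun t : ℝ => (1 + t ^ M) ^ (-b)) 0 := by
      apply hin.rpow_const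
      left
      simp [Real.zero_rpow hM.ne']
    exact (h1.mul h2).sub h3
  have hzero : (fun t : ℝ => t ^ p * (1 + t ^ M) ^ (-b) - t ^ (p - M * b)) 0 = 0 := by
    simp [Real.zero_rpow hp.ne', Real.zero_rpow hq.ne']
  have htend : Tendsto (fun t : ℝ => t ^ p * (1 + t ^ M) ^ (-b) - t ^ (p - M * b)) atTop (𝓝 0) := by
    apply squeeze_zero_norm' (a := fun t : ℝ => b * t ^ (p - M * b - M))
    · filter_upwards [eventually_ge_atTop (1:ℝ)] with t ht
      rw [Real.norm_eq_abs]
      exact boundA hM hb p ht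
    · have h : Tendsto (fun t : ℝ => t ^ (p - M * b - M)) atTop (𝓝 0) := by
        have := tendsto_rpow_neg_atTop (y := M - (p - M * b)) (by linarith)
        simpa [show -(M - (p - M*b)) = p - M*b - M by ring] using this
      simpa using h.const_mul b
  have hint' : IntegrableOn (fun x : ℝ =>
      p * (x ^ (p - 1) * (1 + x ^ M) ^ (-b) - x ^ (p - M * b - 1))
        - (M * b) * (x ^ (p + M - 1) * (1 + x ^ M) ^ (-(b+1)) - x ^ (p - M * b - 1))) (Ioi 0) :=
    (hint1.const_mul p).sub (hint2.const_mul (M*b))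
  have hFTC := integral_Ioi_of_hasDerivAt_of_tendsto hcont hderiv hint' htend
  simp only [Real.zero_rpow hp.ne', Real.zero_rpow hq.ne', zero_mul, sub_zero, sub_self, zero_sub, neg_zero] at hFTC
  rw [integral_sub (hint1.const_mul p) (hint2.const_mul (M*b)),
    integral_const_mul, integral_const_mul] at hFTC
  linarith

private lemma stmt4R {M K J : ℝ} (hM3 : 3 ≤ M) (hK2 : 2 ≤ K) (hJ2 : 2 ≤ J)
    (hJM : 2 * J < M + 2) :
    ∫ t in Ioi (0 : ℝ),
        (t ^ (M * K - J) / (1 + t ^ M) ^ (K - 1 / 2) - t ^ (M / 2 - J)) =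
      ((M * (K - 1) - (J - 1)) / (M * (K - 1) - M / 2)) *
        ∫ t in Ioi (0 : ℝ),
          (t ^ (M * (K - 1) - J) / (1 + t ^ M) ^ ((K - 1) - 1 / 2) - t ^ (M / 2 - J)) := by
  have hM : (0:ℝ) < M := by linarith
  have hKM : (0:ℝ) ≤ M * (K - 2) := mul_nonneg hM.le (by linarith)
  have hb : (0:ℝ) < K - 1 - 1/2 := by linarith
  have hp : (0:ℝ) < M * (K - 1) - (J - 1) := by nlinarith
  have hq : (0:ℝ) < (M * (K - 1) - (J - 1)) - M * (K - 1 - 1/2) := by nlinarith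
  have hqM : (M * (K - 1) - (J - 1)) - M * (K - 1 - 1/2) < M := by nlinarith
  have key := keyLem hM hb hp hq hqM
  have E1 : ∫ t in Ioi (0:ℝ),
      (t ^ (M * (K - 1) - J) / (1 + t ^ M) ^ ((K - 1) - 1/2) - t ^ (M / 2 - J))
      = ∫ t in Ioi (0:ℝ), (t ^ ((M * (K - 1) - (J - 1)) - 1) * (1 + t ^ M) ^ (-(K - 1 - 1/2))
          - t ^ ((M * (K - 1) - (J - 1)) - M * (K - 1 - 1/2) - 1)) := by
    apply setIntegral_congr_fun measurableSet_Ioi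
    intro t ht
    have ht0 : (0:ℝ) < t := ht
    have htm : (0:ℝ) ≤ 1 + t ^ M := by positivity
    dsimp only
    rw [div_eq_mul_inv, ← Real.rpow_neg htm,
      show M * (K - 1) - J = (M * (K - 1) - (J - 1)) - 1 by ring,
      show M / 2 - J = (M * (K - 1) - (J - 1)) - M * (K - 1 - 1/2) - 1 by ring]
  have E2 : ∫ t in Ioi (0:ℝ),
      (t ^ (M * K - J) / (1 + t ^ M) ^ (K - 1/2) - t ^ (M / 2 - J))
      = ∫ t in Ioi (0:ℝ), (t ^ ((M * (K - 1) - (J - 1)) + M - 1) * (1 + t ^ M) ^ (-((K - 1 - 1/2)+1))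
          - t ^ ((M * (K - 1) - (J - 1)) - M * (K - 1 - 1/2) - 1)) := by
    apply setIntegral_congr_fun measurableSet_Ioi
    intro t ht
    have ht0 : (0:ℝ) < t := ht
    have htm : (0:ℝ) ≤ 1 + t ^ M := by positivity
    dsimp only
    rw [div_eq_mul_inv, ← Real.rpow_neg htm,
      show M * K - J = (M * (K - 1) - (J - 1)) + M - 1 by ring,
      show K - 1/2 = (K - 1 - 1/2) + 1 by ring,
      show M / 2 - J = (M * (K - 1) - (J - 1)) - M * (K - 1 - 1/2) - 1 by ring]
  rw [E1, E2]
  have hc2 : M * (K - 1) - M / 2 ≠ 0 := by nlinarith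
  rw [div_mul_eq_mul_div, eq_div_iff hc2]
  linear_combination -key

theorem stmt_4 (m j k : ℕ) (hm : 3 ≤ m) (hk : 2 ≤ k) (hkj : k ≤ j)
    (hj : 2 * j < m + 2) (hj1 : j ≠ 1) :
    ∫ t in Ioi (0 : ℝ),
        (t ^ ((m : ℝ) * k - j) / (1 + t ^ m) ^ ((k : ℝ) - 1 / 2) - t ^ ((m : ℝ) / 2 - j)) =
      (((m : ℝ) * ((k : ℝ) - 1) - ((j : ℝ) - 1)) / ((m : ℝ) * ((k : ℝ) - 1) - (m : ℝ) / 2)) *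
        ∫ t in Ioi (0 : ℝ),
          (t ^ ((m : ℝ) * ((k : ℝ) - 1) - j) / (1 + t ^ m) ^ (((k : ℝ) - 1) - 1 / 2) -
            t ^ ((m : ℝ) / 2 - j)) := by
  have hM3 : (3:ℝ) ≤ (m:ℝ) := by exact_mod_cast hm
  have hK2 : (2:ℝ) ≤ (k:ℝ) := by exact_mod_cast hk
  have hJ2 : (2:ℝ) ≤ (j:ℝ) := by exact_mod_cast hk.trans hkj
  have hJM : 2 * (j:ℝ) < (m:ℝ) + 2 := by exact_mod_cast hj
  have := stmt4R hM3 hK2 hJ2 hJM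
  simpa [← Real.rpow_natCast] using this
end

section
/- Let m ≥ 3 and 2 ≤ j < (m+2)/2. Then ∫₀^∞ ( t^{m−j}/√(1+t^m) − t^{m/2−j} ) dt = −(2^{2(j−1)/m}/m) · B(1 − 2(j−1)/m, 1/2 + (j−1)/m). -/
open Real MeasureTheory Set
lemma betaIoi {a b : ℝ} (ha : 0 < a) (hb : 0 < b) :
    ∫ w in Ioi (0:ℝ), w ^ (a-1) * (1+w) ^ (-(a+b)) =
      ∫ x in (0:ℝ)..1, x ^ (a-1) * (1-x) ^ (b-1) := by
  have hd : ∀ w ∈ Ioi (0:ℝ), HasDerivWithinAt (fun w : ℝ => w / (1+w))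
      (((1+w)^2)⁻¹) (Ioi 0) w := by
    intro w hw
    have hw0 : (0:ℝ) < w := hw
    have h1w : (1:ℝ) + w ≠ 0 := by positivity
    have := (hasDerivAt_id' w).div ((hasDerivAt_const w (1:ℝ)).add (hasDerivAt_id' w)) h1w
    refine (this.hasDerivWithinAt).congr_deriv ?_
    simp
  have hinj : InjOn (fun w : ℝ => w / (1+w)) (Ioi 0) := by
    intro x hx y hy hxy
    have hx0 : (0:ℝ) < x := hx
    have hy0 : (0:ℝ) < y := hy
    have h1x : (1:ℝ) + x ≠ 0 := by positivity
    have h1y : (1:ℝ) + y ≠ 0 := by positivity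
    field_simp at hxy
    linarith
  have himg : (fun w : ℝ => w / (1+w)) '' (Ioi 0) = Ioo 0 1 := by
    ext u
    constructor
    · rintro ⟨w, hw, rfl⟩
      have hw0 : (0:ℝ) < w := hw
      constructor
      · positivity
      · rw [div_lt_one (by positivity)]; linarith
    · rintro ⟨hu0, hu1⟩
      refine ⟨u / (1-u), ?_, ?_⟩
      · exact div_pos hu0 (by linarith)
      · have h1u : (1:ℝ) - u ≠ 0 := by linarith
        field_simp; ring
  have key := integral_image_eq_integral_abs_deriv_smul measurableSet_Ioi hd hinj
    (fun x : ℝ => x ^ (a-1) * (1-x) ^ (b-1))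
  rw [himg] at key
  rw [intervalIntegral.integral_of_le zero_le_one, integral_Ioc_eq_integral_Ioo, key]
  apply setIntegral_congr_fun measurableSet_Ioi
  intro w hw
  have hw0 : (0:ℝ) < w := hw
  have h1w : (0:ℝ) < 1 + w := by positivity
  have e1 : (1:ℝ) - w / (1+w) = (1+w)⁻¹ := by field_simp; ring
  dsimp only
  have habs : |(((1+w):ℝ)^(2:ℕ))⁻¹| = (1+w) ^ (-(2:ℝ)) := by
    rw [abs_of_pos (by positivity), show ((1+w):ℝ)^(2:ℕ) = (1+w) ^ ((2:ℕ):ℝ) from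
      (Real.rpow_natCast _ 2).symm, ← Real.rpow_neg h1w.le]
    norm_num
  rw [smul_eq_mul, e1, habs, div_rpow hw0.le h1w.le, div_eq_mul_inv,
      ← Real.rpow_neg h1w.le (a-1), Real.inv_rpow h1w.le, ← Real.rpow_neg h1w.le (b-1)]
  have hcomb : (1+w) ^ (-(2:ℝ)) * ((1+w) ^ (-(a-1)) * (1+w) ^ (-(b-1))) = (1+w) ^ (-(a+b)) := by
    rw [← Real.rpow_add h1w, ← Real.rpow_add h1w]; ring_nf
  linear_combination (-(w ^ (a-1))) * hcomb

lemma base_cont {a : ℝ} : ContinuousOn (fun w : ℝ => w ^ (-a) * (1+w) ^ (-(3/2):ℝ)) (Ioi 0) := by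
  apply ContinuousOn.mul
  · exact ContinuousOn.rpow_const continuousOn_id (fun x hx => Or.inl (ne_of_gt hx))
  · exact ContinuousOn.rpow_const (continuousOn_const.add continuousOn_id)
      (fun x hx => Or.inl (by have : (0:ℝ) < x := hx; positivity))

lemma base_integrable {a : ℝ} (h0 : 0 < a) (h2 : a < 1/2) :
    IntegrableOn (fun w : ℝ => w ^ (-a) * (1+w) ^ (-(3/2):ℝ)) (Ioi 0) := by
  have hmeas : AEStronglyMeasurable (fun w : ℝ => w ^ (-a) * (1+w) ^ (-(3/2):ℝ))
      (volume.restrict (Ioi (0:ℝ))) := base_cont.aestronglyMeasurable measurableSet_Ioi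
  rw [← Ioc_union_Ioi_eq_Ioi (zero_le_one : (0:ℝ) ≤ 1)]
  apply IntegrableOn.union
  · have hb : IntegrableOn (fun w : ℝ => w ^ (-a)) (Ioc (0:ℝ) 1) := by
      rw [← intervalIntegrable_iff_integrableOn_Ioc_of_le zero_le_one]
      exact intervalIntegral.intervalIntegrable_rpow' (by linarith)
    refine Integrable.mono hb
      (hmeas.mono_measure (Measure.restrict_mono Ioc_subset_Ioi_self le_rfl)) ?_
    filter_upwards [ae_restrict_mem measurableSet_Ioc] with w hw
    have hw0 : (0:ℝ) < w := hw.1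
    rw [Real.norm_eq_abs, Real.norm_eq_abs, abs_mul,
      abs_of_nonneg (Real.rpow_nonneg hw0.le _),
      abs_of_nonneg (Real.rpow_nonneg (by linarith : (0:ℝ) ≤ 1 + w) _)]
    nth_rewrite 2 [← mul_one (w ^ (-a))]
    apply mul_le_mul_of_nonneg_left _ (Real.rpow_nonneg hw0.le _)
    exact Real.rpow_le_one_of_one_le_of_nonpos (by linarith) (by norm_num)
  · have hb : IntegrableOn (fun w : ℝ => w ^ (-a + -(3/2):ℝ)) (Ioi (1:ℝ)) :=
      integrableOn_Ioi_rpow_of_lt (by linarith) one_pos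
    refine Integrable.mono hb
      (hmeas.mono_measure (Measure.restrict_mono (Ioi_subset_Ioi zero_le_one) le_rfl)) ?_
    filter_upwards [ae_restrict_mem measurableSet_Ioi] with w hw
    have hw1 : (1:ℝ) < w := hw
    have hw0 : (0:ℝ) < w := by linarith
    rw [Real.norm_eq_abs, Real.norm_eq_abs, abs_mul,
      abs_of_nonneg (Real.rpow_nonneg hw0.le _),
      abs_of_nonneg (Real.rpow_nonneg (by linarith : (0:ℝ) ≤ 1 + w) _),
      Real.rpow_add hw0, abs_mul, abs_of_nonneg (Real.rpow_nonneg hw0.le (-a)),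
      abs_of_nonneg (Real.rpow_nonneg hw0.le (-(3/2):ℝ))]
    apply mul_le_mul_of_nonneg_left _ (Real.rpow_nonneg hw0.le (-a))
    exact Real.rpow_le_rpow_of_nonpos hw0 (by linarith) (by norm_num)

lemma scaled_congr {a v : ℝ} (hv : 0 < v) :
    ∀ x ∈ Ioi (0:ℝ), (v*x) ^ (-a) * ((v*x)+v) ^ (-(3/2):ℝ)
      = (v ^ (-a) * v ^ (-(3/2):ℝ)) * (x ^ (-a) * (1+x) ^ (-(3/2):ℝ)) := by
  intro x hx
  have hx0 : (0:ℝ) < x := hx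
  rw [Real.mul_rpow hv.le hx0.le, show (v*x)+v = v*(1+x) by ring,
    Real.mul_rpow hv.le (by positivity : (0:ℝ) ≤ 1+x)]
  ring

lemma scaled_int {a v : ℝ} (h0 : 0 < a) (h2 : a < 1/2) (hv : 0 < v) :
    IntegrableOn (fun s : ℝ => s ^ (-a) * (s+v) ^ (-(3/2):ℝ)) (Ioi 0) := by
  have base : IntegrableOn (fun w : ℝ => w ^ (-a) * (1+w) ^ (-(3/2):ℝ)) (Ioi 0) :=
    base_integrable h0 h2
  have := (integrableOn_Ioi_comp_mul_left_iff
    (fun s : ℝ => s ^ (-a) * (s+v) ^ (-(3/2):ℝ)) 0 hv)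
  rw [mul_zero] at this
  rw [← this]
  apply Integrable.congr (base.const_mul (v ^ (-a) * v ^ (-(3/2):ℝ)))
  filter_upwards [ae_restrict_mem measurableSet_Ioi] with x hx
  exact (scaled_congr hv x hx).symm

lemma scaled_val {a v : ℝ} (h0 : 0 < a) (h2 : a < 1/2) (hv : 0 < v) :
    ∫ s in Ioi (0:ℝ), s ^ (-a) * (s+v) ^ (-(3/2):ℝ)
      = v ^ (-a - 1/2) * ∫ w in Ioi (0:ℝ), w ^ (-a) * (1+w) ^ (-(3/2):ℝ) := by
  have key := integral_comp_mul_left_Ioi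
    (fun s : ℝ => s ^ (-a) * (s+v) ^ (-(3/2):ℝ)) 0 hv
  rw [mul_zero] at key
  have h1 : ∫ x in Ioi (0:ℝ), (v*x) ^ (-a) * ((v*x)+v) ^ (-(3/2):ℝ)
      = (v ^ (-a) * v ^ (-(3/2):ℝ)) * ∫ w in Ioi (0:ℝ), w ^ (-a) * (1+w) ^ (-(3/2):ℝ) := by
    rw [← MeasureTheory.integral_const_mul]
    exact setIntegral_congr_fun measurableSet_Ioi (scaled_congr hv)
  rw [h1, smul_eq_mul] at key
  have hvrpow : v * (v ^ (-a) * v ^ (-(3/2):ℝ)) = v ^ (-a - 1/2) := by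
    nth_rewrite 1 [← Real.rpow_one v]
    rw [← Real.rpow_add hv, ← Real.rpow_add hv]
    congr 1
    ring
  rw [eq_comm, inv_mul_eq_iff_eq_mul₀ hv.ne'] at key
  rw [key, ← mul_assoc, hvrpow]

lemma kern {s : ℝ} (hs : 0 < s) :
    ∫ v in Ioc (0:ℝ) 1, (s+v) ^ (-(3/2):ℝ)
      = 2 * (s ^ (-(1/2):ℝ) - (1+s) ^ (-(1/2):ℝ)) := by
  rw [← intervalIntegral.integral_of_le zero_le_one]
  have := intervalIntegral.integral_comp_add_left (a := (0:ℝ)) (b := 1)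
    (fun x : ℝ => x ^ (-(3/2):ℝ)) s
  rw [add_zero] at this
  rw [this, integral_rpow (Or.inr ⟨by norm_num, by
    rw [Set.mem_uIcc]; push_neg
    constructor <;> intro h <;> linarith⟩)]
  rw [show (-(3/2):ℝ) + 1 = -(1/2) by norm_num, show s + 1 = 1 + s by ring]
  field_simp
  ring

lemma core {a : ℝ} (h0 : 0 < a) (h2 : a < 1/2) :
    ∫ s in Ioi (0:ℝ), s ^ (-a) * ((1+s) ^ (-(1/2):ℝ) - s ^ (-(1/2):ℝ))
      = -(1/(1-2*a)) * ∫ w in Ioi (0:ℝ), w ^ (-a) * (1+w) ^ (-(3/2):ℝ) := by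
  set C := ∫ w in Ioi (0:ℝ), w ^ (-a) * (1+w) ^ (-(3/2):ℝ) with hC
  set F : ℝ → ℝ → ℝ := fun v s => (1/2) * (s ^ (-a) * (s+v) ^ (-(3/2):ℝ)) with hF
  -- pointwise representation
  have hpt : ∀ s ∈ Ioi (0:ℝ), s ^ (-a) * ((1+s) ^ (-(1/2):ℝ) - s ^ (-(1/2):ℝ))
      = - ∫ v in Ioc (0:ℝ) 1, F v s := by
    intro s hs
    have hs0 : (0:ℝ) < s := hs
    have : ∫ v in Ioc (0:ℝ) 1, F v s
        = ((1/2) * s ^ (-a)) * ∫ v in Ioc (0:ℝ) 1, (s+v) ^ (-(3/2):ℝ) := by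
      rw [← MeasureTheory.integral_const_mul]
      apply setIntegral_congr_fun measurableSet_Ioc
      intro v hv
      simp only [hF]
      ring
    rw [this, kern hs0]
    ring
  -- measurability of the kernel on the product
  have hmeasF : AEStronglyMeasurable (Function.uncurry F)
      ((volume.restrict (Ioc (0:ℝ) 1)).prod (volume.restrict (Ioi (0:ℝ)))) := by
    rw [Measure.prod_restrict]
    apply ContinuousOn.aestronglyMeasurable _ (measurableSet_Ioc.prod measurableSet_Ioi)
    apply ContinuousOn.mul continuousOn_const
    apply ContinuousOn.mul
    · exact ContinuousOn.rpow_const continuous_snd.continuousOn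
        (fun p hp => Or.inl (ne_of_gt hp.2))
    · exact ContinuousOn.rpow_const (continuous_snd.add continuous_fst).continuousOn
        (fun p hp => Or.inl (by have h1 : (0:ℝ) < p.1 := hp.1.1
                                have h2' : (0:ℝ) < p.2 := hp.2; positivity))
  -- integrability on the product
  have hint : Integrable (Function.uncurry F)
      ((volume.restrict (Ioc (0:ℝ) 1)).prod (volume.restrict (Ioi (0:ℝ)))) := by
    rw [integrable_prod_iff hmeasF]
    constructor
    · filter_upwards [ae_restrict_mem measurableSet_Ioc] with v hv
      exact ((scaled_int h0 h2 hv.1).const_mul (1/2))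
    · have hv12 : IntegrableOn (fun v : ℝ => (1/2) * (v ^ (-a-1/2) * C)) (Ioc (0:ℝ) 1) := by
        apply Integrable.const_mul
        apply Integrable.mul_const
        exact (intervalIntegrable_iff_integrableOn_Ioc_of_le zero_le_one).mp
          (intervalIntegral.intervalIntegrable_rpow' (by linarith))
      apply Integrable.congr hv12
      filter_upwards [ae_restrict_mem measurableSet_Ioc] with v hv
      have hv0 : (0:ℝ) < v := hv.1
      have : ∫ s in Ioi (0:ℝ), ‖F v s‖ = ∫ s in Ioi (0:ℝ), F v s := by
        apply setIntegral_congr_fun measurableSet_Ioi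
        intro s hs
        have hs0 : (0:ℝ) < s := hs
        have : (0:ℝ) ≤ F v s := by
          simp only [hF]
          positivity
        simp [Real.norm_eq_abs, abs_of_nonneg this]
      simp only [Function.uncurry_apply_pair]
      rw [eq_comm, this]
      have : ∫ s in Ioi (0:ℝ), F v s = (1/2) * (v ^ (-a-1/2) * C) := by
        simp only [hF]
        rw [MeasureTheory.integral_const_mul, scaled_val h0 h2 hv0]
      rw [this]
  -- the swap
  have hswap := MeasureTheory.integral_integral_swap hint
  -- assemble
  rw [setIntegral_congr_fun measurableSet_Ioi hpt, integral_neg]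
  have hinner : ∀ v ∈ Ioc (0:ℝ) 1, ∫ s in Ioi (0:ℝ), F v s = (C/2) * v ^ (-a-1/2) := by
    intro v hv
    simp only [hF]
    rw [MeasureTheory.integral_const_mul, scaled_val h0 h2 hv.1]
    ring
  have hv_int : ∫ v in Ioc (0:ℝ) 1, v ^ (-a-1/2) = 1/(1/2-a) := by
    rw [← intervalIntegral.integral_of_le zero_le_one,
      integral_rpow (Or.inl (by linarith))]
    rw [Real.one_rpow, Real.zero_rpow (show (-a-1/2+1:ℝ) ≠ 0 by intro h; linarith),
      show (-a-1/2+1:ℝ) = 1/2-a by ring]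
    norm_num
  rw [← hswap, setIntegral_congr_fun measurableSet_Ioc hinner,
    MeasureTheory.integral_const_mul, hv_int]
  field_simp


lemma gammaIdent {a : ℝ} (h0 : 0 < a) (h2 : a < 1/2) :
    (1/(1-2*a)) * realBeta (1-a) (1/2+a) = 2 ^ (2*a) * realBeta (1-2*a) (1/2+a) := by
  have hdup := Real.Gamma_mul_Gamma_add_half (1-a)
  have hrec : Real.Gamma (2*(1-a)) = (1-2*a) * Real.Gamma (1-2*a) := by
    rw [show 2*(1-a) = (1-2*a)+1 by ring, Real.Gamma_add_one (by intro h; linarith)]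
  have h32 : Real.Gamma ((1-a) + (1/2+a)) = Real.sqrt π / 2 := by
    rw [show (1-a) + (1/2+a) = (1/2:ℝ)+1 by ring, Real.Gamma_add_one (by norm_num),
      Real.Gamma_one_half_eq]
    ring
  have h32a : Real.Gamma ((1-2*a) + (1/2+a)) = Real.Gamma ((1-a) + 1/2) := by
    congr 1; ring
  have hpow : (2:ℝ) ^ (1-2*(1-a)) = 2 ^ (2*a) / 2 := by
    rw [show (1-2*(1-a)) = 2*a - 1 by ring, Real.rpow_sub two_pos, Real.rpow_one]
  have hG1 : 0 < Real.Gamma (1-a) := Real.Gamma_pos_of_pos (by linarith)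
  have hG2 : 0 < Real.Gamma (1/2+a) := Real.Gamma_pos_of_pos (by linarith)
  have hG3 : 0 < Real.Gamma ((1-a)+1/2) := Real.Gamma_pos_of_pos (by linarith)
  have hG4 : 0 < Real.Gamma (1-2*a) := Real.Gamma_pos_of_pos (by linarith)
  have hpi : 0 < Real.sqrt π := Real.sqrt_pos.mpr Real.pi_pos
  have h12a : (0:ℝ) < 1-2*a := by linarith
  rw [realBeta, realBeta, h32, h32a]
  rw [hrec, hpow] at hdup
  set G1 := Real.Gamma (1-a)
  set G2 := Real.Gamma (1/2+a)
  set G3 := Real.Gamma ((1-a)+1/2)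
  set G4 := Real.Gamma (1-2*a)
  set P := Real.sqrt π
  set B := (2:ℝ) ^ (2*a)
  field_simp
  linear_combination 2 * hdup


lemma beta01 {a b : ℝ} (ha : 0 < a) (hb : 0 < b) :
    ∫ x in (0:ℝ)..1, x ^ (a-1) * (1-x) ^ (b-1) = realBeta a b := by
  have h1 : Complex.betaIntegral (a:ℂ) (b:ℂ)
      = ((∫ x in (0:ℝ)..1, x ^ (a-1) * (1-x) ^ (b-1) : ℝ) : ℂ) := by
    rw [Complex.betaIntegral, ← intervalIntegral.integral_ofReal]
    apply intervalIntegral.integral_congr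
    intro x hx
    rw [uIcc_of_le zero_le_one] at hx
    have h0 : (0:ℝ) ≤ x := hx.1
    have h1' : (0:ℝ) ≤ 1 - x := by linarith [hx.2]
    dsimp only
    rw [show ((a:ℂ)-1) = ((a-1:ℝ):ℂ) by push_cast; ring,
      show ((b:ℂ)-1) = ((b-1:ℝ):ℂ) by push_cast; ring,
      show (1 - (x:ℂ)) = ((1-x:ℝ):ℂ) by push_cast; ring,
      ← Complex.ofReal_cpow h0, ← Complex.ofReal_cpow h1', ← Complex.ofReal_mul]
  have h2 := Complex.Gamma_mul_Gamma_eq_betaIntegral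
    (s := (a:ℂ)) (t := (b:ℂ)) (by simpa using ha) (by simpa using hb)
  rw [h1, ← Complex.ofReal_add, Complex.Gamma_ofReal, Complex.Gamma_ofReal,
    Complex.Gamma_ofReal, ← Complex.ofReal_mul, ← Complex.ofReal_mul] at h2
  have h3 := Complex.ofReal_inj.mp h2
  have hG : Real.Gamma (a+b) ≠ 0 := (Real.Gamma_pos_of_pos (by linarith)).ne'
  rw [realBeta, h3, mul_div_cancel_left₀ _ hG]

theorem stmt_5 (m j : ℕ) (hm : 3 ≤ m) (hj : 2 ≤ j) (hj2 : 2 * j < m + 2) :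
    ∫ t in Ioi (0 : ℝ),
        (t ^ ((m : ℝ) - j) / Real.sqrt (1 + t ^ m) - t ^ ((m : ℝ) / 2 - j)) =
      -(2 ^ (2 * ((j : ℝ) - 1) / m) / m) *
        realBeta (1 - 2 * ((j : ℝ) - 1) / m) (1 / 2 + ((j : ℝ) - 1) / m) := by
  have hm0 : (0:ℝ) < (m:ℝ) := by
    have : (3:ℝ) ≤ (m:ℝ) := by exact_mod_cast hm
    linarith
  have hmne : (m:ℝ) ≠ 0 := hm0.ne'
  set a : ℝ := ((j:ℝ)-1)/m with ha
  have hjR : (2:ℝ) ≤ (j:ℝ) := by exact_mod_cast hj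
  have hj2R : 2*(j:ℝ) < (m:ℝ) + 2 := by exact_mod_cast hj2
  have ha0 : 0 < a := div_pos (by linarith) hm0
  have ha2 : a < 1/2 := by
    rw [ha, div_lt_iff₀ hm0]
    linarith
  have hma : (m:ℝ) * a = (j:ℝ) - 1 := by
    rw [ha]; field_simp
  -- change of variables t ↦ t^m
  have key := integral_comp_rpow_Ioi_of_pos
    (g := fun s : ℝ => (1/(m:ℝ)) * (s ^ (-a) * ((1+s) ^ (-(1/2):ℝ) - s ^ (-(1/2):ℝ)))) hm0
  have hcong : ∀ t ∈ Ioi (0:ℝ),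
      ((m:ℝ) * t ^ ((m:ℝ)-1)) • ((1/(m:ℝ)) * ((t ^ ((m:ℝ))) ^ (-a) *
        ((1+t ^ ((m:ℝ))) ^ (-(1/2):ℝ) - (t ^ ((m:ℝ))) ^ (-(1/2):ℝ))))
        = t ^ ((m : ℝ) - j) / Real.sqrt (1 + t ^ m) - t ^ ((m : ℝ)/2 - j) := by
    intro t ht
    have ht0 : (0:ℝ) < t := ht
    have hT : (0:ℝ) < t ^ ((m:ℝ)) := Real.rpow_pos_of_pos ht0 _
    have hTa : (t ^ ((m:ℝ))) ^ (-a) = t ^ (-((j:ℝ)-1)) := by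
      rw [← Real.rpow_mul ht0.le]
      congr 1
      rw [show (m:ℝ) * -a = -((m:ℝ)*a) by ring, hma]
    have hT12 : (t ^ ((m:ℝ))) ^ (-(1/2):ℝ) = t ^ (-((m:ℝ)/2)) := by
      rw [← Real.rpow_mul ht0.le]; congr 1; ring
    have h1T : (1:ℝ) + t ^ m = 1 + t ^ ((m:ℝ)) := by rw [Real.rpow_natCast]
    have hsqrt : Real.sqrt (1 + t ^ m) = (1 + t ^ ((m:ℝ))) ^ ((1/2):ℝ) := by
      rw [h1T, Real.sqrt_eq_rpow]
    have e1 : t ^ ((m:ℝ)-1) * t ^ (-((j:ℝ)-1)) = t ^ ((m:ℝ) - j) := by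
      rw [← Real.rpow_add ht0]; congr 1; ring
    have e2 : t ^ ((m:ℝ) - j) * t ^ (-((m:ℝ)/2)) = t ^ ((m:ℝ)/2 - j) := by
      rw [← Real.rpow_add ht0]; congr 1; ring
    rw [smul_eq_mul, hTa, hT12, hsqrt,
      div_eq_mul_inv (t ^ ((m:ℝ) - (j:ℝ))) ((1+t ^ ((m:ℝ))) ^ ((1/2):ℝ)),
      ← Real.rpow_neg (by positivity : (0:ℝ) ≤ 1 + t ^ ((m:ℝ)))]
    have hcancel : ∀ X : ℝ, (m:ℝ) * t ^ ((m:ℝ)-1) * ((1/(m:ℝ)) * X) = t ^ ((m:ℝ)-1) * X := by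
      intro X; field_simp
    rw [hcancel]
    linear_combination ((1+t ^ ((m:ℝ))) ^ (-(1/2):ℝ) - t ^ (-((m:ℝ)/2))) * e1 - e2
  -- the value of the base integral
  have hCval : (∫ w in Ioi (0:ℝ), w ^ (-a) * (1+w) ^ (-(3/2):ℝ))
      = realBeta (1-a) (1/2+a) := by
    have hb1 : (0:ℝ) < 1 - a := by linarith
    have hb2 : (0:ℝ) < 1/2 + a := by linarith
    have h := (betaIoi hb1 hb2).trans (beta01 hb1 hb2)
    rw [← h]
    apply setIntegral_congr_fun measurableSet_Ioi
    intro w hw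
    rw [show ((1-a)-1 : ℝ) = -a by ring, show (-((1-a)+(1/2+a)) : ℝ) = -(3/2) by ring]
  calc ∫ t in Ioi (0 : ℝ),
        (t ^ ((m : ℝ) - j) / Real.sqrt (1 + t ^ m) - t ^ ((m : ℝ) / 2 - j))
      = ∫ t in Ioi (0:ℝ), ((m:ℝ) * t ^ ((m:ℝ)-1)) • ((1/(m:ℝ)) * ((t ^ ((m:ℝ))) ^ (-a) *
          ((1+t ^ ((m:ℝ))) ^ (-(1/2):ℝ) - (t ^ ((m:ℝ))) ^ (-(1/2):ℝ)))) :=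
        (setIntegral_congr_fun measurableSet_Ioi hcong).symm
    _ = ∫ s in Ioi (0:ℝ), (1/(m:ℝ)) * (s ^ (-a) * ((1+s) ^ (-(1/2):ℝ) - s ^ (-(1/2):ℝ))) := key
    _ = (1/(m:ℝ)) * ∫ s in Ioi (0:ℝ), s ^ (-a) * ((1+s) ^ (-(1/2):ℝ) - s ^ (-(1/2):ℝ)) :=
        MeasureTheory.integral_const_mul _ _
    _ = (1/(m:ℝ)) * (-(1/(1-2*a)) * realBeta (1-a) (1/2+a)) := by
        rw [core ha0 ha2, hCval]
    _ = -(2 ^ (2 * ((j : ℝ) - 1) / m) / m) *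
        realBeta (1 - 2 * ((j : ℝ) - 1) / m) (1 / 2 + a) := by
        rw [show 2 * ((j : ℝ) - 1) / m = 2*a by rw [ha]; ring]
        linear_combination (-(1/(m:ℝ))) * gammaIdent ha0 ha2
end

section
/- Let m ≥ 4 be an even integer, j = (m+2)/2, and 1 ≤ k ≤ j. Then ∫₀^∞ ( t^{mk−j}/(1+t^m)^{k−1/2} − 1/(1+t) ) dt = (2/m)( ln 2 − 1/1 − 1/3 − ⋯ − 1/(2k−3) ), where the sum 1/1 + 1/3 + ⋯ + 1/(2k−3) is empty when k = 1. -/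
open Real MeasureTheory Set
open Filter Topology

noncomputable def S (n : ℕ) (t : ℝ) : ℝ := t ^ n / Real.sqrt (1 + t ^ (2*n))

noncomputable def G (n k : ℕ) (t : ℝ) : ℝ :=
  (1/(n:ℝ)) * (Real.log (1 + S n t)
      - ∑ i ∈ Finset.range (k-1), (S n t)^(2*i+1)/(2*(i:ℝ)+1))
    + ((1/(2*(n:ℝ))) * Real.log (1 + t^(2*n)) - Real.log (1+t))

lemma q_pos (n : ℕ) (t : ℝ) : (0:ℝ) < 1 + t ^ (2*n) := by
  have : (0:ℝ) ≤ t ^ (2*n) := by rw [mul_comm, pow_mul]; positivity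
  linarith

lemma r_pos (n : ℕ) (t : ℝ) : 0 < Real.sqrt (1 + t ^ (2*n)) :=
  Real.sqrt_pos.2 (q_pos n t)

lemma r_sq (n : ℕ) (t : ℝ) : (Real.sqrt (1 + t ^ (2*n)))^2 = 1 + t ^ (2*n) :=
  Real.sq_sqrt (q_pos n t).le

lemma S_nonneg (n : ℕ) (t : ℝ) (ht : 0 ≤ t) : 0 ≤ S n t := by
  unfold S
  have := (r_pos n t).le
  positivity

lemma S_lt_one (n : ℕ) (t : ℝ) (ht : 0 ≤ t) : S n t < 1 := by
  unfold S
  rw [div_lt_one (r_pos n t)]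
  have h1 : (t ^ n) ^ 2 < (Real.sqrt (1 + t ^ (2*n)))^2 := by
    rw [r_sq, ← pow_mul, mul_comm n 2]
    nlinarith [pow_nonneg ht (2*n)]
  nlinarith [r_pos n t, pow_nonneg ht n]

lemma S_sq (n : ℕ) (t : ℝ) : (S n t)^2 = t^(2*n) / (1 + t^(2*n)) := by
  unfold S
  rw [div_pow, r_sq, ← pow_mul, mul_comm n 2]

lemma hasDerivAt_S (n : ℕ) (hn : 1 ≤ n) (t : ℝ) (ht : 0 < t) :
    HasDerivAt (S n) (n * t ^ (n-1) / (Real.sqrt (1 + t ^ (2*n)))^3) t := by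
  have hq : HasDerivAt (fun t : ℝ => 1 + t ^ (2*n)) ((2*n) * t ^ (2*n-1)) t := by
    simpa using (hasDerivAt_pow (2*n) t).const_add 1
  have hr : HasDerivAt (fun t : ℝ => Real.sqrt (1 + t ^ (2*n)))
      ((2*n) * t ^ (2*n-1) / (2 * Real.sqrt (1 + t ^ (2*n)))) t := by
    have := (Real.hasDerivAt_sqrt (q_pos n t).ne').comp t hq
    convert this using 1 <;> first | rfl | ring
  have hnum : HasDerivAt (fun t : ℝ => t ^ n) (n * t ^ (n-1)) t := by
    simpa using hasDerivAt_pow n t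
  have h := hnum.div hr (r_pos n t).ne'
  have heq : ((n:ℝ) * t ^ (n - 1) * Real.sqrt (1 + t ^ (2*n)) -
      t ^ n * (2 * n * t ^ (2 * n - 1) / (2 * Real.sqrt (1 + t ^ (2*n))))) /
      (Real.sqrt (1 + t ^ (2*n))) ^ 2
      = n * t ^ (n-1) / (Real.sqrt (1 + t ^ (2*n)))^3 := by
    have hpow : t^n * t^(2*n-1) = t^(n-1) * t^(2*n) := by
      rw [← pow_add, ← pow_add]; congr 1; omega
    have hr2 := r_sq n t
    have hrp := r_pos n t
    set r := Real.sqrt (1 + t ^ (2*n))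
    field_simp
    linear_combination (t^(n-1)) * hr2 - hpow
  rw [← heq]
  exact h

theorem keyid (n : ℕ) (hn : 1 ≤ n) (s r a t σ P : ℝ) (ht : 0 < t) (hr : 0 < r)
    (hs0 : 0 ≤ s) (hsr : s * r = a * t) (hr2 : r^2 = 1 + a^2*t^2)
    (hgeom : (1 - s^2) * σ = 1 - P) :
    (1/(n:ℝ)) * ((n*a/r^3)/(1+s) - σ*(n*a/r^3)) + (1/(2*(n:ℝ)))*(2*n*(a^2*t)/(1+a^2*t^2))
      = P*s/t := by
  have hn0 : (n:ℝ) ≠ 0 := Nat.cast_ne_zero.2 (by omega)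
  have h1s : 0 < 1 + s := by linarith
  have key : (1-s)*(1+s)*r^2 = 1 := by linear_combination hr2 - (s*r + a*t) * hsr
  have e1 : 1/(1+s) = (1-s)*r^2 := by
    rw [eq_comm, eq_div_iff h1s.ne']; linear_combination key
  have e2 : σ = r^2 * (1 - P) := by
    have h1ms : 1 - s^2 = 1/r^2 := by
      rw [eq_div_iff (pow_ne_zero 2 hr.ne')]; linear_combination key
    rw [h1ms] at hgeom
    field_simp at hgeom
    linarith [hgeom]
  have e1' : (n:ℝ)*a/r^3/(1+s) = (n*a/r^3)*((1-s)*r^2) := by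
    rw [div_eq_mul_one_div ((n:ℝ)*a/r^3), e1]
  rw [e1', e2, ← hr2]
  have step : (1/(n:ℝ)) * ((n*a/r^3)*((1-s)*r^2) - (r^2*(1-P))*(n*a/r^3))
      + (1/(2*(n:ℝ)))*(2*n*(a^2*t)/r^2) = (a/r)*(P-s) + a^2*t/r^2 := by
    field_simp
    ring
  rw [step]
  field_simp
  linear_combination (-(a*t + r*P)) * hsr

lemma hasDerivAt_G_s8 (n k : ℕ) (hn : 1 ≤ n) (hk : 1 ≤ k) (t : ℝ) (ht : 0 < t) :
    HasDerivAt (G n k) ((S n t)^(2*k-1)/t - 1/(1+t)) t := by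
  have hS := hasDerivAt_S n hn t ht
  set r := Real.sqrt (1 + t ^ (2*n)) with hrdef
  set s' : ℝ := n * t ^ (n-1) / r^3 with hs'def
  have hSpos := S_nonneg n t ht.le
  have h1S : (1 : ℝ) + S n t ≠ 0 := by linarith
  have hlog1 : HasDerivAt (fun u => Real.log (1 + S n u)) (s'/(1 + S n t)) t := by
    simpa using ((hS.const_add 1).log h1S)
  have hsum : HasDerivAt (fun u => ∑ i ∈ Finset.range (k-1), (S n u)^(2*i+1)/(2*(i:ℝ)+1))
      (∑ i ∈ Finset.range (k-1), (S n t)^(2*i) * s') t := by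
    apply HasDerivAt.fun_sum
    intro i _
    have h1 := (hS.pow (2*i+1)).div_const (2*(i:ℝ)+1)
    have h2 : (↑(2*i+1) * S n t ^ (2*i+1-1) * s') / (2*(i:ℝ)+1) = (S n t)^(2*i) * s' := by
      have h3 : (2*i+1-1) = 2*i := by omega
      have h4 : ((2*i+1 : ℕ) : ℝ) = 2*(i:ℝ)+1 := by push_cast; ring
      rw [h3, h4]
      have h5 : (2*(i:ℝ)+1) ≠ 0 := by positivity
      field_simp
    rw [← h2]
    exact h1
  have hlog2 : HasDerivAt (fun u : ℝ => Real.log (1 + u^(2*n)))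
      (((2*n) * t ^ (2*n-1))/(1 + t^(2*n))) t := by
    have hq : HasDerivAt (fun u : ℝ => 1 + u ^ (2*n)) ((2*n) * t ^ (2*n-1)) t := by
      simpa using (hasDerivAt_pow (2*n) t).const_add 1
    simpa using hq.log (q_pos n t).ne'
  have hlog3 : HasDerivAt (fun u : ℝ => Real.log (1 + u)) (1/(1+t)) t := by
    have : HasDerivAt (fun u : ℝ => 1 + u) 1 t := by
      simpa using (hasDerivAt_id t).const_add 1
    simpa using this.log (by linarith : (1:ℝ) + t ≠ 0)
  have hG := (((hlog1.sub hsum).const_mul (1/(n:ℝ))).add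
      ((hlog2.const_mul (1/(2*(n:ℝ)))).sub hlog3))
  have hval : (1/(n:ℝ)) * (s'/(1 + S n t) - ∑ i ∈ Finset.range (k-1), (S n t)^(2*i) * s')
      + ((1/(2*(n:ℝ))) * (((2*n) * t ^ (2*n-1))/(1 + t^(2*n))) - 1/(1+t))
      = (S n t)^(2*k-1)/t - 1/(1+t) := by
    have hkey := keyid n hn (S n t) r (t^(n-1)) t
      (σ := ∑ i ∈ Finset.range (k-1), ((S n t)^2)^i) (P := ((S n t)^2)^(k-1))
      ht (r_pos n t) hSpos
      (by
        show S n t * r = t^(n-1) * t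
        have e : t^(n-1)*t = t^n := by rw [← pow_succ]; congr 1; omega
        rw [e, hrdef]; unfold S
        field_simp)
      (by rw [r_sq]; congr 1; rw [← pow_mul, ← pow_add]; congr 1; omega)
      (by
        have := geom_sum_mul ((S n t)^2) (k-1)
        linear_combination -this)
    have hsum2 : ∑ i ∈ Finset.range (k-1), (S n t)^(2*i) * s'
        = (∑ i ∈ Finset.range (k-1), ((S n t)^2)^i) * s' := by
      rw [Finset.sum_mul]
      congr 1; funext i
      rw [← pow_mul]
    have hP : ((S n t)^2)^(k-1) * S n t = (S n t)^(2*k-1) := by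
      rw [← pow_mul, ← pow_succ]
      congr 1; omega
    have ha2 : (t^(n-1))^2 * t = t^(2*n-1) := by
      rw [← pow_mul, ← pow_succ]; congr 1; omega
    have ha2' : (t^(n-1))^2 * t^2 = t^(2*n) := by
      rw [← pow_mul, ← pow_add]; congr 1; omega
    rw [hsum2, hs'def]
    rw [ha2, ha2'] at hkey
    linear_combination hkey + (1/t) * hP
  rw [← hval]
  exact hG

lemma continuous_S (n : ℕ) : Continuous (S n) := by
  unfold S
  exact Continuous.div (by fun_prop) (Real.continuous_sqrt.comp (by fun_prop))
    (fun t => (r_pos n t).ne')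

lemma S_zero (n : ℕ) (hn : 1 ≤ n) : S n 0 = 0 := by
  unfold S
  rw [zero_pow (by omega : n ≠ 0)]
  simp

lemma tendsto_S (n : ℕ) (hn : 1 ≤ n) : Tendsto (S n) atTop (𝓝 1) := by
  have hq : Tendsto (fun t:ℝ => 1 + t^(2*n)) atTop atTop :=
    tendsto_atTop_add_const_left _ 1 (tendsto_pow_atTop (by omega))
  have hinv : Tendsto (fun t:ℝ => 1/(1 + t^(2*n))) atTop (𝓝 0) := by
    simpa [one_div, Pi.inv_def] using hq.inv_tendsto_atTop
  have hsqrt : Tendsto (fun t:ℝ => Real.sqrt (1 - 1/(1 + t^(2*n)))) atTop (𝓝 1) := by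
    have h1 : Tendsto (fun t:ℝ => 1 - 1/(1 + t^(2*n))) atTop (𝓝 (1 - 0)) :=
      tendsto_const_nhds.sub hinv
    have := (Real.continuous_sqrt.tendsto (1 - 0)).comp h1
    simpa [Function.comp_def] using this
  apply hsqrt.congr'
  filter_upwards [eventually_gt_atTop (0:ℝ)] with t ht
  have hqp := q_pos n t
  have h1 : 1 - 1/(1 + t^(2*n)) = t^(2*n)/(1+t^(2*n)) := by field_simp; ring
  have h2 : (0:ℝ) ≤ t^(2*n) := by positivity
  rw [h1, Real.sqrt_div h2]
  unfold S
  congr 1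
  rw [mul_comm 2 n, pow_mul, Real.sqrt_sq (pow_nonneg ht.le n)]

lemma tendsto_G (n k : ℕ) (hn : 1 ≤ n) :
    Tendsto (G n k) atTop
      (𝓝 ((1/(n:ℝ)) * (Real.log 2 - ∑ i ∈ Finset.range (k-1), 1/(2*(i:ℝ)+1)))) := by
  have hn0 : (n:ℝ) ≠ 0 := Nat.cast_ne_zero.2 (by omega)
  have hS1 := tendsto_S n hn
  have hlog1 : Tendsto (fun t => Real.log (1 + S n t)) atTop (𝓝 (Real.log 2)) := by
    have h2 : Tendsto (fun t => 1 + S n t) atTop (𝓝 2) := by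
      have := tendsto_const_nhds.add hS1 (f := fun _ : ℝ => (1:ℝ))
      norm_num at this
      exact this
    exact ((Real.continuousAt_log (by norm_num)).tendsto).comp h2
  have hsum : Tendsto (fun t => ∑ i ∈ Finset.range (k-1), (S n t)^(2*i+1)/(2*(i:ℝ)+1)) atTop
      (𝓝 (∑ i ∈ Finset.range (k-1), 1/(2*(i:ℝ)+1))) := by
    apply tendsto_finset_sum
    intro i _
    have := (hS1.pow (2*i+1)).div_const (2*(i:ℝ)+1)
    simpa using this
  have htail : Tendsto (fun t:ℝ => (1/(2*(n:ℝ))) * Real.log (1 + t^(2*n)) - Real.log (1+t))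
      atTop (𝓝 0) := by
    set F : ℝ → ℝ := fun u => (1/(2*(n:ℝ))) * (Real.log (1+u^(2*n)) - (2*n) * Real.log (1+u))
      with hF
    have hFc : ContinuousAt F 0 := by
      apply ContinuousAt.mul continuousAt_const
      apply ContinuousAt.sub
      · exact ContinuousAt.log (by fun_prop) (by
          rw [zero_pow (by omega : 2*n ≠ 0)]; norm_num)
      · exact ContinuousAt.mul continuousAt_const (ContinuousAt.log (by fun_prop) (by norm_num))
    have h0 : F 0 = 0 := by
      simp [hF, zero_pow (by omega : 2*n ≠ 0)]
    have hcomp := hFc.tendsto.comp tendsto_inv_atTop_zero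
    rw [h0] at hcomp
    apply hcomp.congr'
    filter_upwards [eventually_gt_atTop (0:ℝ)] with t ht
    show F t⁻¹ = _
    have htn : (0:ℝ) < t^(2*n) := by positivity
    have e1 : (1:ℝ) + (t⁻¹)^(2*n) = (1 + t^(2*n))/t^(2*n) := by
      rw [inv_pow]
      field_simp
      ring
    have e2 : (1:ℝ) + t⁻¹ = (1+t)/t := by field_simp; ring
    rw [hF]
    simp only []
    rw [e1, e2, Real.log_div (by positivity) htn.ne',
        Real.log_div (by positivity) ht.ne', Real.log_pow]
    field_simp
    push_cast
    ring
  have hcomb := ((hlog1.sub hsum).const_mul (1/(n:ℝ))).add htail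
  rw [add_zero] at hcomb
  exact hcomb

lemma G_zero (n k : ℕ) (hn : 1 ≤ n) : G n k 0 = 0 := by
  unfold G
  rw [S_zero n hn, zero_pow (by omega : 2*n ≠ 0)]
  simp

lemma contG0 (n k : ℕ) (hn : 1 ≤ n) : ContinuousWithinAt (G n k) (Ici 0) 0 := by
  apply ContinuousAt.continuousWithinAt
  have hS0 : S n 0 = 0 := S_zero n hn
  unfold G
  apply ContinuousAt.add
  · apply ContinuousAt.mul continuousAt_const
    apply ContinuousAt.sub
    · exact ContinuousAt.log ((continuous_const.add (continuous_S n)).continuousAt)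
        (by rw [hS0]; norm_num)
    · exact (continuous_finset_sum _
        (fun i _ => ((continuous_S n).pow _).div_const _)).continuousAt
  · apply ContinuousAt.sub
    · apply ContinuousAt.mul continuousAt_const
      exact ContinuousAt.log (by fun_prop) (by rw [zero_pow (by omega : 2*n ≠ 0)]; norm_num)
    · exact ContinuousAt.log (by fun_prop) (by norm_num)

lemma bound_aux (c t a A : ℝ) (hc : 1 ≤ c) (ht : 1 < t) (ha0 : 0 ≤ a)
    (hA0 : 0 ≤ A) (hA1 : A ≤ 1) (hber : 1 - A ≤ (2*c-1)*(1-a))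
    (h1A : 1 - a ≤ 1/t^2) : |A/t - 1/(1+t)| ≤ 2*c*(1/t^2) := by
  have htpos : (0:ℝ) < t := by linarith
  have ht1 : (0:ℝ) < 1 + t := by linarith
  have hc0 : (0:ℝ) ≤ 2*c - 1 := by linarith
  rw [abs_le]
  constructor
  · -- lower bound
    have e1 : (1:ℝ)/(1+t) ≤ 1/t := by gcongr; linarith
    have e2 : (1-A)/t ≤ ((2*c-1)*(1-a))/t := by gcongr
    have e3 : ((2*c-1)*(1-a))/t ≤ ((2*c-1)*(1/t^2))/t := by
      gcongr
    have e4 : ((2*c-1)*(1/t^2))/t ≤ (2*c-1)*(1/t^2) := by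
      rw [div_le_iff₀ htpos]
      have h5 : (0:ℝ) ≤ (2*c-1)*(1/t^2) := by positivity
      nlinarith
    have e5 : (2*c-1)*(1/t^2) ≤ 2*c*(1/t^2) := by
      have : (0:ℝ) ≤ 1/t^2 := by positivity
      nlinarith
    have e6 : (1-A)/t ≤ 2*c*(1/t^2) := by linarith
    have e7 : A/t - 1/(1+t) ≥ A/t - 1/t := by linarith
    have e8 : A/t - 1/t = -((1-A)/t) := by ring
    linarith
  · -- upper bound
    have e1 : A/t ≤ 1/t := by gcongr
    have e2 : (1:ℝ)/t - 1/(1+t) = 1/(t*(1+t)) := by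
      field_simp
      ring
    have e3 : (1:ℝ)/(t*(1+t)) ≤ 1/t^2 := by
      apply one_div_le_one_div_of_le (by positivity)
      nlinarith
    have e4 : (1:ℝ)/t^2 ≤ 2*c*(1/t^2) := by
      have h5 : (0:ℝ) ≤ 1/t^2 := by positivity
      nlinarith
    linarith

lemma integrableH (n k : ℕ) (hn : 1 ≤ n) (hk : 1 ≤ k) :
    IntegrableOn (fun t => (S n t)^(2*k-1)/t - 1/(1+t)) (Ioi (0:ℝ)) := by
  rw [← Ioc_union_Ioi_eq_Ioi (by norm_num : (0:ℝ) ≤ 1)]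
  apply IntegrableOn.union
  · -- on Ioc 0 1
    have hφ : IntegrableOn
        (fun t => t^(n*(2*k-1)-1)/(Real.sqrt (1+t^(2*n)))^(2*k-1) - 1/(1+t))
        (Icc (0:ℝ) 1) := by
      apply ContinuousOn.integrableOn_Icc
      apply ContinuousOn.sub
      · exact ContinuousOn.div (by fun_prop)
          ((Real.continuous_sqrt.comp (by fun_prop)).pow _).continuousOn
          (fun t _ => pow_ne_zero _ (r_pos n t).ne')
      · exact ContinuousOn.div continuousOn_const (by fun_prop)
          (fun t htt => by have := htt.1; intro h; linarith)
    apply (hφ.mono_set Ioc_subset_Icc_self).congr_fun ?_ measurableSet_Ioc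
    intro t htt
    have ht0 : 0 < t := htt.1
    have hone : 1 ≤ n*(2*k-1) := Nat.one_le_iff_ne_zero.2
      (Nat.mul_ne_zero (by omega) (by omega))
    have e : t^(n*(2*k-1)) = t^(n*(2*k-1)-1)*t := by
      rw [← pow_succ]; congr 1; omega
    show _ = (S n t)^(2*k-1)/t - 1/(1+t)
    unfold S
    rw [div_pow, ← pow_mul, e]
    have hrne := (r_pos n t).ne'
    field_simp
  · -- on Ioi 1
    have hcont : ContinuousOn (fun t : ℝ => (S n t)^(2*k-1)/t - 1/(1+t)) (Ioi 1) := by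
      apply ContinuousOn.sub
      · exact ContinuousOn.div ((continuous_S n).pow _).continuousOn continuousOn_id
          (fun t htt => by have : (1:ℝ) < t := htt; positivity)
      · exact ContinuousOn.div continuousOn_const (by fun_prop)
          (fun t htt => by have : (1:ℝ) < t := htt; intro h; linarith)
    have hbound : IntegrableOn (fun t : ℝ => (2*(k:ℝ)) * t^(-2:ℝ)) (Ioi 1) :=
      (integrableOn_Ioi_rpow_of_lt (by norm_num) one_pos).const_mul _
    apply Integrable.mono hbound (hcont.aestronglyMeasurable measurableSet_Ioi)
    rw [ae_restrict_iff' measurableSet_Ioi]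
    apply ae_of_all
    intro t ht
    have ht1 : (1:ℝ) < t := ht
    have htpos : (0:ℝ) < t := by linarith
    have ht1 : (1:ℝ) < t := ht
    have htpos : (0:ℝ) < t := by linarith
    have ha0 : 0 ≤ S n t := S_nonneg n t htpos.le
    have ha1 : S n t ≤ 1 := (S_lt_one n t htpos.le).le
    have hA0 : 0 ≤ (S n t)^(2*k-1) := pow_nonneg ha0 _
    have hA1 : (S n t)^(2*k-1) ≤ 1 := pow_le_one₀ ha0 ha1
    have hkR : (1:ℝ) ≤ (k:ℝ) := by exact_mod_cast hk
    have hber : 1 - (S n t)^(2*k-1) ≤ (2*(k:ℝ)-1) * (1 - S n t) := by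
      have hb := one_add_mul_le_pow (a := S n t - 1) (by linarith) (2*k-1)
      have hc : ((2*k-1 : ℕ) : ℝ) = 2*(k:ℝ)-1 := by
        push_cast [Nat.cast_sub (by omega : 1 ≤ 2*k)]; ring
      rw [show (1 + (S n t-1)) = S n t by ring, hc] at hb
      linarith
    have hsq := S_sq n t
    have hqp := q_pos n t
    have h1a2 : 1 - (S n t)^2 = 1/(1+t^(2*n)) := by rw [hsq]; field_simp; ring
    have hts : t^2 ≤ t^(2*n) := pow_le_pow_right₀ ht1.le (by omega)
    have h1A : 1 - S n t ≤ 1/t^2 := by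
      have h1 : 1 - S n t ≤ 1 - (S n t)^2 := by nlinarith
      have h2 : (1:ℝ)/(1+t^(2*n)) ≤ 1/t^2 := by
        apply one_div_le_one_div_of_le (by positivity)
        linarith
      linarith
    have hb := bound_aux (k:ℝ) t (S n t) ((S n t)^(2*k-1)) hkR ht1 ha0 hA0 hA1 hber h1A
    have hrpow : t^(-2:ℝ) = 1/t^2 := by
      rw [show (-2:ℝ) = -((2:ℕ):ℝ) by norm_num, Real.rpow_neg htpos.le, Real.rpow_natCast,
        one_div]
    rw [Real.norm_eq_abs, Real.norm_eq_abs, hrpow]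
    rw [abs_of_nonneg (by positivity : (0:ℝ) ≤ 2*(k:ℝ)*(1/t^2))]
    exact hb


lemma integral_H (n k : ℕ) (hn : 1 ≤ n) (hk : 1 ≤ k) :
    ∫ t in Ioi (0:ℝ), ((S n t)^(2*k-1)/t - 1/(1+t))
      = (1/(n:ℝ)) * (Real.log 2 - ∑ i ∈ Finset.range (k-1), 1/(2*(i:ℝ)+1)) := by
  have h := integral_Ioi_of_hasDerivAt_of_tendsto (f := G n k)
    (f' := fun t => (S n t)^(2*k-1)/t - 1/(1+t)) (a := 0)
    (contG0 n k hn) (fun x hx => hasDerivAt_G_s8 n k hn hk x hx)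
    (integrableH n k hn hk) (tendsto_G n k hn)
  rw [h, G_zero n k hn, sub_zero]

theorem stmt_8 (m j k : ℕ) (hm : 4 ≤ m) (hme : Even m) (hj : 2 * j = m + 2)
    (hk : 1 ≤ k) (hkj : k ≤ j) :
    ∫ t in Ioi (0 : ℝ),
        (t ^ ((m : ℝ) * k - j) / (1 + t ^ m) ^ ((k : ℝ) - 1 / 2) - 1 / (1 + t)) =
      (2 / m) * (Real.log 2 - ∑ i ∈ Finset.range (k - 1), 1 / (2 * (i : ℝ) + 1)) := by
  obtain ⟨n, hn, hjn⟩ : ∃ n, m = 2*n ∧ j = n + 1 := ⟨j - 1, by omega, by omega⟩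
  have hn1 : 1 ≤ n := by omega
  subst hn hjn
  have hEq : EqOn (fun t : ℝ => t ^ ((2*n : ℕ) * (k:ℝ) - ((n:ℕ)+1:ℕ)) /
      (1 + t ^ (2*n)) ^ ((k : ℝ) - 1 / 2) - 1 / (1 + t))
      (fun t => (S n t)^(2*k-1)/t - 1/(1+t)) (Ioi 0) := by
    intro t ht
    have ht0 : (0:ℝ) < t := ht
    have hb := q_pos n t
    have hle : n + 1 ≤ 2*n*k := by
      have h2 : 2*n ≤ 2*n*k := Nat.le_mul_of_pos_right _ (by omega)
      omega
    have hexp : ((2*n : ℕ):ℝ) * (k:ℝ) - (((n:ℕ)+1:ℕ):ℝ) = ((2*n*k - (n+1) : ℕ) : ℝ) := by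
      rw [Nat.cast_sub hle]
      push_cast
      ring
    simp only []
    rw [hexp, Real.rpow_natCast]
    have hden : (1 + t^(2*n)) ^ ((k:ℝ) - 1/2) = (Real.sqrt (1+t^(2*n)))^(2*k-1) := by
      rw [show (k:ℝ) - 1/2 = (1/2 : ℝ) * ((2*k-1 : ℕ):ℝ) by
        rw [Nat.cast_sub (by omega : 1 ≤ 2*k)]; push_cast; ring]
      rw [Real.rpow_mul hb.le, Real.rpow_natCast, ← Real.sqrt_eq_rpow]
    rw [hden]
    unfold S
    rw [div_pow, ← pow_mul]
    have e : t ^ (n*(2*k-1)) = t ^ (2*n*k - (n+1)) * t := by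
      rw [← pow_succ]
      congr 1
      zify [hle, (by omega : 1 ≤ 2*k)]
      ring
    rw [e]
    have hrne := (r_pos n t).ne'
    field_simp
  rw [setIntegral_congr_fun measurableSet_Ioi hEq, integral_H n k hn1 hk]
  have hn0 : (n:ℝ) ≠ 0 := Nat.cast_ne_zero.2 (by omega)
  have : (2:ℝ) / ((2*n : ℕ):ℝ) = 1/(n:ℝ) := by
    push_cast
    field_simp
  rw [this]
end
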